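/- arXiv:0902.2524 — 7 statements merged into one kernel-verified Lean document; each statement's English description precedes it below -/
import Mathlib

section
/- For every x > 0, x·e^{1/(2x) − 1/(12x²)} − x < e^{ψ(x+1)} − x < x·e^{1/(2x)} − x. -/
open Real Filter Set

/-- The digamma (psi) function: the logarithmic derivative of the gamma function. -/
noncomputable def psi (x : ℝ) : ℝ := deriv (fun t : ℝ => Real.log (Real.Gamma t)) x

private lemma aux_upper (t : ℝ) (ht : 1 < t) : Real.log t < (t^2 - 1)/(2*t) := by
  have key : StrictMonoOn (fun s : ℝ => (s^2 - 1)/(2*s) - Real.log s) (Ici 1) := by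
    apply strictMonoOn_of_deriv_pos (convex_Ici 1)
    · intro s hs
      have hs0 : (0:ℝ) < s := lt_of_lt_of_le one_pos hs
      exact ((((continuous_pow 2).continuousAt.sub continuousAt_const).div
        ((continuous_const.mul continuous_id).continuousAt) (by positivity : (2:ℝ)*s ≠ 0)).sub
        (Real.continuousAt_log hs0.ne')).continuousWithinAt
    · intro s hs
      rw [interior_Ici] at hs
      have hs1 : (1:ℝ) < s := hs
      have hs0 : (0:ℝ) < s := by linarith
      have h1 : HasDerivAt (fun s : ℝ => (s^2 - 1)/(2*s) - Real.log s)
          ((s - 1)^2/(2*s^2)) s := by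
        have ha := ((hasDerivAt_pow 2 s).sub_const 1).div
          ((hasDerivAt_id s).const_mul 2) (by positivity : 2*s ≠ 0)
        have hb := Real.hasDerivAt_log hs0.ne'
        refine (ha.sub hb).congr_deriv ?_
        have hne : s ≠ 0 := hs0.ne'
        simp only [id_eq, Pi.mul_apply, Pi.pow_apply]
        field_simp
        ring
      rw [h1.deriv]
      exact div_pos (pow_pos (by linarith) 2) (by positivity)
  have h := key (self_mem_Ici) (mem_Ici.mpr ht.le) ht
  simp only [one_pow, Real.log_one] at h
  norm_num at h
  linarith

private lemma aux_lower (t : ℝ) (ht : 1 < t) :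
    (t^2 - 1)/(2*t) - (t+1)*(t-1)^3/(12*t^2) < Real.log t := by
  have key : StrictMonoOn
      (fun s : ℝ => Real.log s - (s^2 - 1)/(2*s) + (s+1)*(s-1)^3/(12*s^2)) (Ici 1) := by
    apply strictMonoOn_of_deriv_pos (convex_Ici 1)
    · intro s hs
      have hs0 : (0:ℝ) < s := lt_of_lt_of_le one_pos hs
      exact (((Real.continuousAt_log hs0.ne').sub
        (((continuous_pow 2).continuousAt.sub continuousAt_const).div
          ((continuous_const.mul continuous_id).continuousAt) (by positivity : (2:ℝ)*s ≠ 0))).add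
        (((continuous_id.add continuous_const).mul
          ((continuous_id.sub continuous_const).pow 3)).continuousAt.div
          ((continuous_const.mul (continuous_pow 2)).continuousAt) (by positivity : (12:ℝ)*s^2 ≠ 0))).continuousWithinAt
    · intro s hs
      rw [interior_Ici] at hs
      have hs1 : (1:ℝ) < s := hs
      have hs0 : (0:ℝ) < s := by linarith
      have h1 : HasDerivAt (fun s : ℝ => Real.log s - (s^2 - 1)/(2*s) + (s+1)*(s-1)^3/(12*s^2))
          ((s - 1)^4/(6*s^3)) s := by
        have ha := ((hasDerivAt_pow 2 s).sub_const 1).div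
          ((hasDerivAt_id s).const_mul 2) (by positivity : 2*s ≠ 0)
        have hb := Real.hasDerivAt_log hs0.ne'
        have hc := (((hasDerivAt_id s).add_const 1).mul
            (((hasDerivAt_id s).sub_const 1).pow 3)).div
          ((hasDerivAt_pow 2 s).const_mul 12) (by positivity : 12*s^2 ≠ 0)
        refine ((hb.sub ha).add hc).congr_deriv ?_
        have hne : s ≠ 0 := hs0.ne'
        simp only [id_eq, Pi.mul_apply, Pi.pow_apply]
        field_simp
        ring
      rw [h1.deriv]
      exact div_pos (pow_pos (by linarith) 4) (by positivity)
  have h := key (self_mem_Ici) (mem_Ici.mpr ht.le) ht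
  simp only [Real.log_one] at h
  norm_num at h
  linarith

private lemma termU (y : ℝ) (hy : 0 < y) :
    Real.log ((y+1)/y) < 1/(2*y) + 1/(2*(y+1)) := by
  have ht : 1 < (y+1)/y := by rw [lt_div_iff₀ hy]; linarith
  have h := aux_upper _ ht
  have he : (((y+1)/y)^2 - 1)/(2*((y+1)/y)) = 1/(2*y) + 1/(2*(y+1)) := by
    have h1 : y ≠ 0 := hy.ne'
    have h2 : y + 1 ≠ 0 := by positivity
    field_simp
    ring
  linarith [he ▸ h]

private lemma termL (y : ℝ) (hy : 0 < y) :
    1/(y+1) + (1/(2*y) - 1/(12*y^2)) - (1/(2*(y+1)) - 1/(12*(y+1)^2))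
      < Real.log ((y+1)/y) := by
  have ht : 1 < (y+1)/y := by rw [lt_div_iff₀ hy]; linarith
  have h := aux_lower _ ht
  have he : (((y+1)/y)^2 - 1)/(2*((y+1)/y)) - ((y+1)/y+1)*((y+1)/y-1)^3/(12*((y+1)/y)^2)
      = 1/(y+1) + (1/(2*y) - 1/(12*y^2)) - (1/(2*(y+1)) - 1/(12*(y+1)^2)) := by
    have h1 : y ≠ 0 := hy.ne'
    have h2 : y + 1 ≠ 0 := by positivity
    field_simp
    ring
  linarith [he ▸ h]

theorem Q_exp_bounds (x : ℝ) (hx : 0 < x) :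
    x * Real.exp (1/(2*x) - 1/(12*x^2)) - x < Real.exp (psi (x + 1)) - x ∧
      Real.exp (psi (x + 1)) - x < x * Real.exp (1/(2*x)) - x := by
  set f : ℝ → ℝ := fun t : ℝ => Real.log (Real.Gamma t) with hfdef
  have hpsi : ∀ y, psi y = deriv f y := fun y => rfl
  have hc : ConvexOn ℝ (Ioi 0) f := Real.convexOn_log_Gamma
  have h_rec : ∀ y : ℝ, 0 < y → f (y + 1) = f y + Real.log y := by
    intro y hy
    simp only [f, Real.Gamma_add_one hy.ne',
      Real.log_mul hy.ne' (Real.Gamma_pos_of_pos hy).ne']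
    ring
  have hder : ∀ {y : ℝ}, 0 < y → DifferentiableAt ℝ f y := by
    intro y hy
    refine (Real.differentiableAt_Gamma ?_).log (Real.Gamma_ne_zero ?_) <;>
      exact fun m => (lt_of_le_of_lt (neg_nonpos.mpr (Nat.cast_nonneg m)) hy).ne'
  have hder_rec : ∀ y : ℝ, 0 < y → deriv f (y + 1) = deriv f y + 1 / y := by
    intro y hy
    rw [← deriv_comp_add_const, one_div, ← Real.deriv_log,
      ← deriv_add (hder hy) (Real.differentiableAt_log hy.ne')]
    apply Filter.EventuallyEq.deriv_eq
    filter_upwards [eventually_gt_nhds hy] using h_rec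
  -- convexity bounds
  have hlow : ∀ y : ℝ, 0 < y → Real.log y ≤ deriv f (y + 1) := by
    intro y hy
    have h := hc.slope_le_deriv (mem_Ioi.mpr hy) (mem_Ioi.mpr (by linarith : (0:ℝ) < y + 1))
      (by linarith) (hder (by linarith))
    rw [slope_def_field, h_rec y hy] at h
    have : (f y + Real.log y - f y) / (y + 1 - y) = Real.log y := by
      field_simp
      ring
    rwa [this] at h
  have hupp : ∀ y : ℝ, 0 < y → deriv f (y + 1) ≤ Real.log (y + 1) := by
    intro y hy
    have h := hc.deriv_le_slope (mem_Ioi.mpr (by linarith : (0:ℝ) < y + 1))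
      (mem_Ioi.mpr (by linarith : (0:ℝ) < y + 1 + 1)) (by linarith) (hder (by linarith))
    rw [slope_def_field, h_rec (y + 1) (by linarith)] at h
    have : (f (y+1) + Real.log (y+1) - f (y+1)) / (y + 1 + 1 - (y + 1)) = Real.log (y+1) := by
      field_simp
      ring
    rwa [this] at h
  -- the remainder g tends to zero along x + n
  have hxn : ∀ n : ℕ, (0:ℝ) < x + n := fun n => by positivity
  have hTop : Tendsto (fun n : ℕ => x + (n:ℝ)) atTop atTop :=
    tendsto_atTop_add_const_left _ x tendsto_natCast_atTop_atTop
  have hInv : Tendsto (fun n : ℕ => 1/(x + (n:ℝ))) atTop (nhds 0) := by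
    simpa [one_div, Function.comp_def] using tendsto_inv_atTop_zero.comp hTop
  have hLogTend : Tendsto (fun n : ℕ => Real.log (1 + 1/(x + (n:ℝ)))) atTop (nhds 0) := by
    have h2 : Tendsto (fun n : ℕ => 1 + 1/(x + (n:ℝ))) atTop (nhds 1) := by
      simpa using tendsto_const_nhds.add hInv
    have h3 := (Real.continuousAt_log one_ne_zero).tendsto.comp h2
    simpa [Function.comp_def, Real.log_one] using h3
  have hgsq : ∀ n : ℕ, 0 ≤ deriv f (x + n + 1) - Real.log (x + n) ∧
      deriv f (x + n + 1) - Real.log (x + n) ≤ Real.log (1 + 1/(x + (n:ℝ))) := by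
    intro n
    have h1 := hlow (x + n) (hxn n)
    have h2 := hupp (x + n) (hxn n)
    constructor
    · linarith
    · have : Real.log (x + n + 1) - Real.log (x + n) = Real.log (1 + 1/(x + (n:ℝ))) := by
        rw [← Real.log_div (by positivity) (hxn n).ne']
        congr 1
        field_simp
      linarith
  have hgTend : Tendsto (fun n : ℕ => deriv f (x + n + 1) - Real.log (x + n)) atTop (nhds 0) := by
    refine tendsto_of_tendsto_of_tendsto_of_le_of_le tendsto_const_nhds hLogTend
      (fun n => (hgsq n).1) (fun n => (hgsq n).2)
  -- step identity
  have hstep : ∀ n : ℕ,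
      (deriv f (x + (n+1) + 1) - Real.log (x + (n+1))) - (deriv f (x + n + 1) - Real.log (x + n))
        = 1/(x + n + 1) - Real.log ((x + n + 1)/(x + n)) := by
    intro n
    have h := hder_rec (x + n + 1) (by positivity)
    have hl : Real.log ((x + n + 1)/(x + n)) = Real.log (x+n+1) - Real.log (x+n) :=
      Real.log_div (by positivity) (hxn n).ne'
    push_cast
    have e1 : x + ((n:ℝ)+1) = x + (n:ℝ) + 1 := by ring
    rw [e1, h, hl]
    ring
  -- UPPER bound: c n = g n - 1/(2(x+n)) is strictly monotone to 0
  have key : Real.log x + (1/(2*x) - 1/(12*x^2)) < deriv f (x + 1) ∧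
      deriv f (x + 1) < Real.log x + 1/(2*x) := by
    constructor
    · -- lower bound via d n = g n - v(x+n), strictly antitone to 0
      set d : ℕ → ℝ := fun n => (deriv f (x + n + 1) - Real.log (x + n))
        - (1/(2*(x+n)) - 1/(12*(x+n)^2)) with hd
      have hanti : StrictAnti d := by
        apply strictAnti_nat_of_succ_lt
        intro n
        have ht := termL (x + n) (hxn n)
        have hs := hstep n
        simp only [hd]
        push_cast
        have e1 : x + ((n:ℝ)+1) = x + (n:ℝ) + 1 := by ring
        rw [e1]
        push_cast at hs
        rw [e1] at hs
        linarith
      have ha0 : Tendsto (fun n : ℕ => 1/(2*(x+(n:ℝ)))) atTop (nhds 0) := by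
        have heq : (fun n : ℕ => 1/(2*(x+(n:ℝ)))) = fun n : ℕ => (1/2:ℝ) * (1/(x+(n:ℝ))) := by
          funext n
          have h := (hxn n).ne'
          field_simp
          try ring
        rw [heq]
        simpa using hInv.const_mul (1/2 : ℝ)
      have hb0 : Tendsto (fun n : ℕ => 1/(12*(x+(n:ℝ))^2)) atTop (nhds 0) := by
        have heq : (fun n : ℕ => 1/(12*(x+(n:ℝ))^2))
            = fun n : ℕ => (1/12:ℝ) * (1/(x+(n:ℝ)) * (1/(x+(n:ℝ)))) := by
          funext n
          have h := (hxn n).ne'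
          field_simp
          try ring
        rw [heq]
        simpa using (hInv.mul hInv).const_mul (1/12 : ℝ)
      have hdt : Tendsto d atTop (nhds 0) := by
        have h1 := ha0.sub hb0
        rw [sub_zero] at h1
        have h2 := hgTend.sub h1
        rw [sub_zero] at h2
        exact h2
      have hd1 : 0 ≤ d 1 := by
        have := hanti.antitone.le_of_tendsto hdt 1
        linarith [this]
      have hd0 : 0 < d 0 := lt_of_le_of_lt hd1 (hanti (by norm_num : (0:ℕ) < 1))
      have : d 0 = deriv f (x + 1) - Real.log x - (1/(2*x) - 1/(12*x^2)) := by
        simp [hd]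
      linarith [this ▸ hd0]
    · set c : ℕ → ℝ := fun n => (deriv f (x + n + 1) - Real.log (x + n)) - 1/(2*(x+n)) with hcdef
      have hmono : StrictMono c := by
        apply strictMono_nat_of_lt_succ
        intro n
        have ht := termU (x + n) (hxn n)
        have hs := hstep n
        have hhalf : 1/(x + (n:ℝ) + 1) = 1/(2*(x + (n:ℝ) + 1)) + 1/(2*(x + (n:ℝ) + 1)) := by
          have h := (hxn n).ne'
          field_simp
          try ring
        simp only [hcdef]
        push_cast
        have e1 : x + ((n:ℝ)+1) = x + (n:ℝ) + 1 := by ring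
        rw [e1]
        push_cast at hs
        rw [e1] at hs
        linarith
      have ha0 : Tendsto (fun n : ℕ => 1/(2*(x+(n:ℝ)))) atTop (nhds 0) := by
        have heq : (fun n : ℕ => 1/(2*(x+(n:ℝ)))) = fun n : ℕ => (1/2:ℝ) * (1/(x+(n:ℝ))) := by
          funext n
          have h := (hxn n).ne'
          field_simp
          try ring
        rw [heq]
        simpa using hInv.const_mul (1/2 : ℝ)
      have hct : Tendsto c atTop (nhds 0) := by
        have h2 := hgTend.sub ha0
        rw [sub_zero] at h2
        exact h2
      have hc1 : c 1 ≤ 0 := by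
        have := hmono.monotone.ge_of_tendsto hct 1
        linarith [this]
      have hc0 : c 0 < 0 := lt_of_lt_of_le (hmono (by norm_num : (0:ℕ) < 1)) hc1
      have : c 0 = deriv f (x + 1) - Real.log x - 1/(2*x) := by simp [hcdef]
      linarith [this ▸ hc0]
  rw [hpsi]
  constructor
  · have h := Real.exp_lt_exp.mpr key.1
    rw [Real.exp_add, Real.exp_log hx] at h
    linarith
  · have h := Real.exp_lt_exp.mpr key.2
    rw [Real.exp_add, Real.exp_log hx] at h
    linarith
end

section
/- For every x > 0, 1/(2x) − 1/(12x²) < ψ(x + 1) − ln x < 1/(2x). -/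
open Real Filter Set

namespace PsiAux

noncomputable def L (t : ℝ) : ℝ := Real.log (t + 1) - Real.log t - 1 / (t + 1)

noncomputable def G (t : ℝ) : ℝ := 1 / (2 * t) - 1 / (12 * t ^ 2)

/-- General scheme: a function with negative derivative on `(0,∞)` tending to `0` at `∞`
is positive on `(0,∞)`. -/
lemma pos_of_deriv_neg_tendsto (p : ℝ → ℝ) (d : ℝ → ℝ)
    (hp : ∀ t, 0 < t → HasDerivAt p (d t) t) (hneg : ∀ t, 0 < t → d t < 0)
    (h0 : Tendsto p atTop (nhds 0)) : ∀ t, 0 < t → 0 < p t := by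
  have anti : StrictAntiOn p (Ioi 0) := by
    refine strictAntiOn_of_deriv_neg (convex_Ioi 0) ?_ ?_
    · exact fun t ht => ((hp t ht).differentiableAt.continuousAt).continuousWithinAt
    · intro t ht
      rw [interior_Ioi] at ht
      rw [(hp t ht).deriv]
      exact hneg t ht
  have nonneg : ∀ s, 0 < s → 0 ≤ p s := by
    intro s hs
    refine le_of_tendsto h0 ?_
    filter_upwards [eventually_gt_atTop s] with u hu
    exact (anti (mem_Ioi.mpr hs) (mem_Ioi.mpr (hs.trans hu)) hu).le
  intro t ht
  calc (0 : ℝ) ≤ p (t + 1) := nonneg _ (by linarith)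
    _ < p t := anti (mem_Ioi.mpr ht) (mem_Ioi.mpr (by linarith)) (by linarith)

lemma hasDerivAt_p (t : ℝ) (ht : 0 < t) :
    HasDerivAt (fun t : ℝ => (1 / t + 1 / (t + 1)) / 2 - (Real.log (t + 1) - Real.log t))
      (-(1 / (2 * t ^ 2 * (t + 1) ^ 2))) t := by
  have ht1 : t + 1 ≠ 0 := by positivity
  have h1 : HasDerivAt (fun t : ℝ => 1 / t) (-(1 / t ^ 2)) t := by
    simpa [one_div] using hasDerivAt_inv ht.ne'
  have h2 : HasDerivAt (fun t : ℝ => t + 1) 1 t := (hasDerivAt_id t).add_const 1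
  have h3 : HasDerivAt (fun t : ℝ => 1 / (t + 1)) (-1 / (t + 1) ^ 2) t := by
    simpa [one_div, Pi.inv_def] using h2.inv ht1
  have h4 : HasDerivAt (fun t : ℝ => Real.log (t + 1)) (1 / (t + 1)) t := by
    simpa using h2.log ht1
  have h5 := Real.hasDerivAt_log ht.ne'
  have := (((h1.add h3).div_const 2).sub (h4.sub h5))
  refine this.congr_deriv ?_
  field_simp
  ring

lemma hasDerivAt_q (t : ℝ) (ht : 0 < t) :
    HasDerivAt (fun t : ℝ => Real.log (t + 1) - Real.log t - (1 / t + 1 / (t + 1)) / 2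
        + (1 / t ^ 2 - 1 / (t + 1) ^ 2) / 12)
      (-(1 / (6 * t ^ 3 * (t + 1) ^ 3))) t := by
  have ht1 : t + 1 ≠ 0 := by positivity
  have h1 : HasDerivAt (fun t : ℝ => 1 / t) (-(1 / t ^ 2)) t := by
    simpa [one_div] using hasDerivAt_inv ht.ne'
  have h2 : HasDerivAt (fun t : ℝ => t + 1) 1 t := (hasDerivAt_id t).add_const 1
  have h3 : HasDerivAt (fun t : ℝ => 1 / (t + 1)) (-1 / (t + 1) ^ 2) t := by
    simpa [one_div, Pi.inv_def] using h2.inv ht1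
  have h4 : HasDerivAt (fun t : ℝ => Real.log (t + 1)) (1 / (t + 1)) t := by
    simpa using h2.log ht1
  have h5 := Real.hasDerivAt_log ht.ne'
  have h6 : HasDerivAt (fun t : ℝ => t ^ 2) (2 * t) t := by
    simpa using hasDerivAt_pow 2 t
  have h7 : HasDerivAt (fun t : ℝ => 1 / t ^ 2) (-(2 * t) / (t ^ 2) ^ 2) t := by
    simpa [one_div, Pi.inv_def] using h6.inv (pow_ne_zero 2 ht.ne')
  have h8 : HasDerivAt (fun t : ℝ => (t + 1) ^ 2) (2 * (t + 1)) t := by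
    have := h2.pow 2
    simpa [Pi.pow_def] using this
  have h9 : HasDerivAt (fun t : ℝ => 1 / (t + 1) ^ 2) (-(2 * (t + 1)) / ((t + 1) ^ 2) ^ 2) t := by
    simpa [one_div, Pi.inv_def] using h8.inv (pow_ne_zero 2 ht1)
  have := ((h4.sub h5).sub ((h1.add h3).div_const 2)).add ((h7.sub h9).div_const 12)
  refine this.congr_deriv ?_
  field_simp
  ring

lemma tendsto_logdiff : Tendsto (fun t : ℝ => Real.log (t + 1) - Real.log t) atTop (nhds 0) := by
  have h1 : Tendsto (fun t : ℝ => 1 + 1 / t) atTop (nhds 1) := by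
    simpa using tendsto_const_nhds.add (tendsto_inv_atTop_zero (𝕜 := ℝ))
  have h2 : Tendsto (fun t : ℝ => Real.log (1 + 1 / t)) atTop (nhds 0) := by
    have := (Real.continuousAt_log one_ne_zero).tendsto.comp h1
    simpa [Function.comp_def] using this
  refine h2.congr' ?_
  filter_upwards [eventually_gt_atTop (0 : ℝ)] with t ht
  rw [show (1 : ℝ) + 1 / t = (t + 1) / t by field_simp,
    Real.log_div (by positivity) ht.ne']

lemma tendsto_one_div_linear (a b : ℝ) (ha : 0 < a) :
    Tendsto (fun t : ℝ => 1 / (a * t + b)) atTop (nhds 0) := by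
  have h : Tendsto (fun t : ℝ => a * t + b) atTop atTop :=
    tendsto_atTop_add_const_right _ b (tendsto_id.const_mul_atTop ha)
  simpa [one_div, Function.comp_def] using (tendsto_inv_atTop_zero (𝕜 := ℝ)).comp h

lemma tendsto_one_div_sq (a : ℝ) (ha : 0 < a) :
    Tendsto (fun t : ℝ => 1 / (a * t ^ 2)) atTop (nhds 0) := by
  have h : Tendsto (fun t : ℝ => a * t ^ 2) atTop atTop :=
    (tendsto_pow_atTop (two_ne_zero)).const_mul_atTop ha
  exact ((tendsto_inv_atTop_zero (𝕜 := ℝ)).comp h).congr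
    (fun t => by simp [Function.comp_def, one_div])

/-- Trapezoid upper bound (strict). -/
lemma log_lt_trapezoid (t : ℝ) (ht : 0 < t) :
    Real.log (t + 1) - Real.log t < (1 / t + 1 / (t + 1)) / 2 := by
  have hneg : ∀ t : ℝ, 0 < t → -(1 / (2 * t ^ 2 * (t + 1) ^ 2)) < 0 := by
    intro t ht
    have : (0:ℝ) < 1 / (2 * t ^ 2 * (t + 1) ^ 2) := by positivity
    linarith
  have := pos_of_deriv_neg_tendsto
    (fun t : ℝ => (1 / t + 1 / (t + 1)) / 2 - (Real.log (t + 1) - Real.log t))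
    (fun t : ℝ => -(1 / (2 * t ^ 2 * (t + 1) ^ 2)))
    hasDerivAt_p hneg ?_ t ht
  · linarith [this]
  · have ha : Tendsto (fun t : ℝ => (1 / t + 1 / (t + 1)) / 2) atTop (nhds 0) := by
      have h1 : Tendsto (fun t : ℝ => 1 / t) atTop (nhds 0) := by
        simpa [one_div] using tendsto_inv_atTop_zero (𝕜 := ℝ)
      have h2 := tendsto_one_div_linear 1 1 one_pos
      simp only [one_mul] at h2
      simpa using (h1.add h2).div_const 2
    simpa using ha.sub tendsto_logdiff

/-- Euler–Maclaurin lower bound (strict). -/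
lemma trapezoid_corr_lt_log (t : ℝ) (ht : 0 < t) :
    (1 / t + 1 / (t + 1)) / 2 - (1 / t ^ 2 - 1 / (t + 1) ^ 2) / 12
      < Real.log (t + 1) - Real.log t := by
  have := pos_of_deriv_neg_tendsto
    (fun t : ℝ => Real.log (t + 1) - Real.log t - (1 / t + 1 / (t + 1)) / 2
        + (1 / t ^ 2 - 1 / (t + 1) ^ 2) / 12)
    (fun t : ℝ => -(1 / (6 * t ^ 3 * (t + 1) ^ 3)))
    hasDerivAt_q (fun t ht => by
      have h : (0:ℝ) < 1 / (6 * t ^ 3 * (t + 1) ^ 3) := by positivity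
      linarith) ?_ t ht
  · linarith [this]
  · have h1 : Tendsto (fun t : ℝ => 1 / t) atTop (nhds 0) := by
      simpa [one_div] using tendsto_inv_atTop_zero (𝕜 := ℝ)
    have h2 := tendsto_one_div_linear 1 1 one_pos
    simp only [one_mul] at h2
    have h3 : Tendsto (fun t : ℝ => 1 / t ^ 2) atTop (nhds 0) := by
      have := tendsto_one_div_sq 1 one_pos
      simpa using this
    have h4 : Tendsto (fun t : ℝ => 1 / (t + 1) ^ 2) atTop (nhds 0) := by
      have h : Tendsto (fun t : ℝ => (t + 1) ^ 2) atTop atTop :=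
        (tendsto_pow_atTop (two_ne_zero)).comp (tendsto_atTop_add_const_right _ 1 tendsto_id)
      simpa [one_div, Function.comp_def] using (tendsto_inv_atTop_zero (𝕜 := ℝ)).comp h
    have := (tendsto_logdiff.sub ((h1.add h2).div_const 2)).add ((h3.sub h4).div_const 12)
    simpa using this

lemma L_lt (t : ℝ) (ht : 0 < t) : L t < 1 / (2 * t) - 1 / (2 * (t + 1)) := by
  have h := log_lt_trapezoid t ht
  have ht1 : (0:ℝ) < t + 1 := by linarith
  unfold L
  have e : (1 / t + 1 / (t + 1)) / 2 - 1 / (t + 1) = 1 / (2 * t) - 1 / (2 * (t + 1)) := by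
    field_simp
    ring
  linarith [e]

lemma lt_L (t : ℝ) (ht : 0 < t) : G t - G (t + 1) < L t := by
  have h := trapezoid_corr_lt_log t ht
  have ht1 : (0:ℝ) < t + 1 := by linarith
  unfold L G
  have e : G t - G (t + 1)
      = (1 / t + 1 / (t + 1)) / 2 - (1 / t ^ 2 - 1 / (t + 1) ^ 2) / 12 - 1 / (t + 1) := by
    unfold G
    field_simp
    ring
  unfold G at e
  linarith [e]

lemma tendsto_one_div' {α : Type*} {l : Filter α} {g : α → ℝ} (hg : Tendsto g l atTop) :
    Tendsto (fun x => 1 / g x) l (nhds 0) :=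
  ((tendsto_inv_atTop_zero (𝕜 := ℝ)).comp hg).congr fun n => (one_div _).symm

lemma tendsto_G : Tendsto G atTop (nhds 0) := by
  unfold G
  have h1 : Tendsto (fun t : ℝ => 1 / (2 * t)) atTop (nhds 0) :=
    tendsto_one_div' (tendsto_id.const_mul_atTop two_pos)
  have h2 : Tendsto (fun t : ℝ => 1 / (12 * t ^ 2)) atTop (nhds 0) :=
    tendsto_one_div' ((tendsto_pow_atTop two_ne_zero).const_mul_atTop (by norm_num))
  simpa using h1.sub h2

noncomputable def f : ℝ → ℝ := fun t : ℝ => Real.log (Real.Gamma t)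

lemma f_rec (x : ℝ) (hx : 0 < x) : f (x + 1) = f x + Real.log x := by
  simp only [f, Real.Gamma_add_one hx.ne',
    Real.log_mul hx.ne' (Real.Gamma_pos_of_pos hx).ne', add_comm]

lemma f_diff {x : ℝ} (hx : 0 < x) : DifferentiableAt ℝ f x :=
  (Real.differentiableAt_Gamma fun m =>
    ne_of_gt (lt_of_le_of_lt (neg_nonpos.mpr m.cast_nonneg) hx)).log
    (Real.Gamma_pos_of_pos hx).ne'

lemma f_rec_deriv (x : ℝ) (hx : 0 < x) : deriv f (x + 1) = deriv f x + 1 / x := by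
  rw [← deriv_comp_add_const, one_div, ← Real.deriv_log,
    ← deriv_add (f_diff hx) (Real.differentiableAt_log hx.ne')]
  apply Filter.EventuallyEq.deriv_eq
  filter_upwards [eventually_gt_nhds hx] with s hs
  exact f_rec s hs

lemma f_convex : ConvexOn ℝ (Ioi 0) f := Real.convexOn_log_Gamma

lemma log_le_derivf (y : ℝ) (hy : 0 < y) : Real.log y ≤ deriv f (y + 1) := by
  have h := f_convex.slope_le_deriv (mem_Ioi.mpr hy)
    (mem_Ioi.mpr (by linarith : (0:ℝ) < y + 1)) (by linarith) (f_diff (by linarith))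
  have e : slope f y (y + 1) = Real.log y := by
    rw [slope_def_field, f_rec y hy, show y + 1 - y = (1:ℝ) by ring, div_one]
    ring
  rwa [e] at h

lemma derivf_le_log (y : ℝ) (hy : 0 < y) : deriv f (y + 1) ≤ Real.log (y + 1) := by
  have h := f_convex.deriv_le_slope (mem_Ioi.mpr (by linarith : (0:ℝ) < y + 1))
    (mem_Ioi.mpr (by linarith : (0:ℝ) < y + 2)) (by linarith) (f_diff (by linarith))
  have e : slope f (y + 1) (y + 2) = Real.log (y + 1) := by
    rw [slope_def_field, show y + 2 = (y + 1) + 1 by ring, f_rec (y + 1) (by linarith),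
      show y + 1 + 1 - (y + 1) = (1:ℝ) by ring, div_one]
    ring
  rwa [e] at h

lemma F_decomp (y : ℝ) (hy : 0 < y) (n : ℕ) :
    deriv f (y + 1) - Real.log y
      = (deriv f (y + n + 1) - Real.log (y + n)) + ∑ k ∈ Finset.range n, L (y + k) := by
  induction n with
  | zero => simp
  | succ n ih =>
    rw [Finset.sum_range_succ, ih]
    have hyn : (0:ℝ) < y + n := by positivity
    have hrec := f_rec_deriv (y + ↑n + 1) (by positivity)
    push_cast
    rw [show y + (↑n + 1) + 1 = y + ↑n + 1 + 1 from by ring,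
      show y + (↑n + 1) = y + ↑n + 1 from by ring]
    unfold L
    linarith [hrec]

lemma sum_le (y : ℝ) (hy : 0 < y) (n : ℕ) :
    ∑ k ∈ Finset.range n, L (y + k) ≤ 1 / (2 * y) - 1 / (2 * (y + n)) := by
  have h := Finset.sum_range_sub' (fun k : ℕ => 1 / (2 * (y + k))) n
  rw [Nat.cast_zero, add_zero] at h
  rw [← h]
  refine Finset.sum_le_sum fun k _ => ?_
  have hyk : (0:ℝ) < y + k := by positivity
  have := (L_lt (y + k) hyk).le
  push_cast
  rw [show y + (↑k + 1) = y + ↑k + 1 from by ring]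
  exact this

lemma le_sum (y : ℝ) (hy : 0 < y) (n : ℕ) :
    G y - G (y + n) ≤ ∑ k ∈ Finset.range n, L (y + k) := by
  have h := Finset.sum_range_sub' (fun k : ℕ => G (y + k)) n
  rw [Nat.cast_zero, add_zero] at h
  rw [← h]
  refine Finset.sum_le_sum fun k _ => ?_
  have hyk : (0:ℝ) < y + k := by positivity
  have := (lt_L (y + k) hyk).le
  push_cast
  rw [show y + (↑k + 1) = y + ↑k + 1 from by ring]
  exact this

lemma F_bounds (y : ℝ) (hy : 0 < y) :
    G y ≤ deriv f (y + 1) - Real.log y ∧ deriv f (y + 1) - Real.log y ≤ 1 / (2 * y) := by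
  have hyn : Tendsto (fun n : ℕ => y + (n : ℝ)) atTop atTop :=
    tendsto_atTop_add_const_left _ y tendsto_natCast_atTop_atTop
  constructor
  · have key : ∀ n : ℕ, G y - G (y + n) ≤ deriv f (y + 1) - Real.log y := by
      intro n
      rw [F_decomp y hy n]
      have hynp : (0:ℝ) < y + n := by positivity
      have h1 : 0 ≤ deriv f (y + n + 1) - Real.log (y + n) := by
        have := log_le_derivf (y + n) hynp
        linarith
      have h2 := le_sum y hy n
      linarith
    have htend : Tendsto (fun n : ℕ => G y - G (y + n)) atTop (nhds (G y)) := by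
      have hG : Tendsto (fun n : ℕ => G (y + n)) atTop (nhds 0) := tendsto_G.comp hyn
      simpa using (tendsto_const_nhds (x := G y)).sub hG
    exact le_of_tendsto htend (Eventually.of_forall key)
  · have key : ∀ n : ℕ, deriv f (y + 1) - Real.log y
        ≤ (Real.log (y + n + 1) - Real.log (y + n)) + (1 / (2 * y) - 1 / (2 * (y + n))) := by
      intro n
      rw [F_decomp y hy n]
      have hynp : (0:ℝ) < y + n := by positivity
      have h1 : deriv f (y + n + 1) ≤ Real.log (y + n + 1) := derivf_le_log (y + n) hynp
      have h2 := sum_le y hy n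
      linarith
    have htend : Tendsto
        (fun n : ℕ => (Real.log (y + n + 1) - Real.log (y + n)) + (1 / (2 * y) - 1 / (2 * (y + n))))
        atTop (nhds (1 / (2 * y))) := by
      have hlog : Tendsto (fun n : ℕ => Real.log (y + n + 1) - Real.log (y + n)) atTop (nhds 0) :=
        tendsto_logdiff.comp hyn
      have hinv : Tendsto (fun n : ℕ => 1 / (2 * (y + n))) atTop (nhds 0) :=
        tendsto_one_div' (hyn.const_mul_atTop two_pos)
      simpa using hlog.add ((tendsto_const_nhds (x := 1 / (2 * y))).sub hinv)
    exact ge_of_tendsto htend (Eventually.of_forall key)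

end PsiAux

theorem psi_log_bounds (x : ℝ) (hx : 0 < x) :
    1/(2*x) - 1/(12*x^2) < psi (x + 1) - Real.log x ∧
      psi (x + 1) - Real.log x < 1/(2*x) := by
  have hx1 : (0:ℝ) < x + 1 := by linarith
  have hdec := PsiAux.F_decomp x hx 1
  simp only [Nat.cast_one, Finset.sum_range_one, Nat.cast_zero, add_zero] at hdec
  have hb := PsiAux.F_bounds (x + 1) hx1
  have hL1 := PsiAux.L_lt x hx
  have hL2 := PsiAux.lt_L x hx
  have hpsi : psi (x + 1) = deriv PsiAux.f (x + 1) := rfl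
  have hGx : PsiAux.G x = 1/(2*x) - 1/(12*x^2) := rfl
  constructor
  · rw [hpsi, hdec, ← hGx]
    linarith [hb.1, hL2]
  · rw [hpsi, hdec]
    linarith [hb.2, hL1]
end

section
/- For every x > 0, ψ'(x)·e^{ψ(x)} < 1, where ψ' is the derivative of the digamma function (the trigamma function). -/
open Real Filter Set

namespace TrigammaProof

open Finset

noncomputable def S (y : ℝ) : ℝ := ∑' n : ℕ, 1 / (y + n) ^ 2

lemma S_def (y : ℝ) : S y = ∑' n : ℕ, 1 / (y + n) ^ 2 := rfl

lemma diffLG {x : ℝ} (hx : 0 < x) :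
    DifferentiableAt ℝ (fun t : ℝ => Real.log (Real.Gamma t)) x := by
  refine (Real.differentiableAt_Gamma fun m => ?_).log (Real.Gamma_pos_of_pos hx).ne'
  have : (0:ℝ) ≤ m := Nat.cast_nonneg m
  intro h; rw [h] at hx; linarith

lemma psi_rec {x : ℝ} (hx : 0 < x) : psi (x + 1) = psi x + 1 / x := by
  unfold psi
  rw [← deriv_comp_add_const, one_div, ← Real.deriv_log,
    ← deriv_add (diffLG hx) (Real.differentiableAt_log hx.ne')]
  apply Filter.EventuallyEq.deriv_eq
  filter_upwards [eventually_gt_nhds hx] with y hy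
  rw [Real.Gamma_add_one hy.ne', Real.log_mul hy.ne' (Real.Gamma_pos_of_pos hy).ne', add_comm]
  rfl

lemma psi_le_log {x : ℝ} (hx : 0 < x) : psi x ≤ Real.log x := by
  have hc := Real.convexOn_log_Gamma
  have h := hc.deriv_le_slope (mem_Ioi.mpr hx) (mem_Ioi.mpr (by linarith : (0:ℝ) < x + 1))
    (by linarith) (diffLG hx)
  have hs : slope (Real.log ∘ Real.Gamma) x (x + 1) = Real.log x := by
    rw [slope_def_field, show x + 1 - x = (1:ℝ) by ring, div_one, Function.comp_apply,
      Function.comp_apply, Real.Gamma_add_one hx.ne',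
      Real.log_mul hx.ne' (Real.Gamma_pos_of_pos hx).ne', add_sub_cancel_right]
  rw [hs] at h
  have : deriv (Real.log ∘ Real.Gamma) x = psi x := by
    unfold psi; congr 1
  rwa [this] at h

lemma log_le_psi {x : ℝ} (hx : 0 < x) : Real.log x ≤ psi (x + 1) := by
  have hc := Real.convexOn_log_Gamma
  have h := hc.slope_le_deriv (mem_Ioi.mpr hx) (mem_Ioi.mpr (by linarith : (0:ℝ) < x + 1))
    (by linarith) (diffLG (by linarith))
  have hs : slope (Real.log ∘ Real.Gamma) x (x + 1) = Real.log x := by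
    rw [slope_def_field, show x + 1 - x = (1:ℝ) by ring, div_one, Function.comp_apply,
      Function.comp_apply, Real.Gamma_add_one hx.ne',
      Real.log_mul hx.ne' (Real.Gamma_pos_of_pos hx).ne', add_sub_cancel_right]
  rw [hs] at h
  have : deriv (Real.log ∘ Real.Gamma) (x + 1) = psi (x + 1) := by
    unfold psi; congr 1
  rwa [this] at h

lemma psi_add_nat {x : ℝ} (hx : 0 < x) (N : ℕ) :
    psi (x + N) = psi x + ∑ k ∈ range N, 1 / (x + k) := by
  induction N with
  | zero => simp
  | succ n ih =>
    have hxn : 0 < x + n := by positivity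
    have : x + (n + 1 : ℕ) = (x + n) + 1 := by push_cast; ring
    rw [this, psi_rec hxn, ih, sum_range_succ, add_assoc]

lemma hasSum_tele (b : ℕ → ℝ) (hb : Filter.Tendsto b atTop (nhds 0))
    (hmono : ∀ n, b (n + 1) ≤ b n) : HasSum (fun n => b n - b (n + 1)) (b 0) := by
  have hanti : Antitone b := antitone_nat_of_succ_le hmono
  have hnn : ∀ n, 0 ≤ b n := fun n =>
    le_of_tendsto hb (eventually_atTop.2 ⟨n, fun m hm => hanti hm⟩)
  rw [hasSum_iff_tendsto_nat_of_nonneg (fun i => by simpa using hmono i) (b 0)]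
  have : ∀ n, ∑ i ∈ range n, (b i - b (i + 1)) = b 0 - b n := fun n =>
    Finset.sum_range_sub' b n
  simp only [this]
  simpa using tendsto_const_nhds.sub hb

lemma summable_S {y : ℝ} (hy : 0 < y) : Summable (fun n : ℕ => 1 / (y + n) ^ 2) := by
  have hbase : Summable (fun n : ℕ => 1 / ((n : ℝ) + 1) ^ 2) := by
    have := Real.summable_one_div_nat_pow.mpr (by norm_num : 1 < 2)
    simpa using (summable_nat_add_iff 1).mpr this
  set c := min y 1 with hc
  have hc0 : 0 < c := lt_min hy one_pos
  refine Summable.of_nonneg_of_le (fun n => by positivity) (fun n => ?_)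
    (hbase.mul_left (1 / c ^ 2))
  have hcn : c * (n + 1) ≤ y + n := by
    rcases le_or_gt y 1 with h | h
    · have : c = y := min_eq_left h
      rw [this]; nlinarith [Nat.cast_nonneg (α := ℝ) n]
    · have : c = 1 := min_eq_right h.le
      rw [this]; nlinarith [Nat.cast_nonneg (α := ℝ) n]
  have h1 : (0:ℝ) < (n:ℝ) + 1 := by positivity
  have h2 : (0:ℝ) < y + n := by positivity
  rw [div_mul_div_comm, one_mul]
  apply div_le_div_of_nonneg_left (by norm_num) (by positivity)
  calc c ^ 2 * ((n:ℝ) + 1) ^ 2 = (c * ((n:ℝ)+1)) ^ 2 := by ring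
  _ ≤ (y + n) ^ 2 := pow_le_pow_left₀ (by positivity) hcn 2

lemma S_pos {x : ℝ} (hx : 0 < x) : 0 < S x := by
  refine Summable.tsum_pos (summable_S hx) (fun n => by positivity) 0 ?_
  simp; positivity

lemma S_rec {x : ℝ} (hx : 0 < x) : S x = 1 / x ^ 2 + S (x + 1) := by
  unfold S
  rw [Summable.tsum_eq_zero_add (summable_S hx)]
  congr 1
  · norm_num
  · apply tsum_congr; intro n; push_cast; ring_nf

lemma tendsto_add_nat_atTop (c : ℝ) : Filter.Tendsto (fun n : ℕ => c + (n:ℝ)) atTop atTop :=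
  tendsto_atTop_add_const_left _ c tendsto_natCast_atTop_atTop

lemma tele1 (c : ℝ) (hc : 0 < c) :
    HasSum (fun n : ℕ => 1 / (c + n) - 1 / (c + n + 1)) (1 / c) := by
  have h := hasSum_tele (fun n : ℕ => 1 / (c + n))
    (by simpa [one_div, Pi.inv_def] using (tendsto_add_nat_atTop c).inv_tendsto_atTop)
    (fun n => by
      apply one_div_le_one_div_of_le (by positivity)
      push_cast; linarith)
  simp only [Nat.cast_zero, add_zero] at h
  convert h using 2 with n
  push_cast; ring

lemma tele3 (c : ℝ) (hc : 0 < c) :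
    HasSum (fun n : ℕ => 1 / (c + n) ^ 3 - 1 / (c + n + 1) ^ 3) (1 / c ^ 3) := by
  have h := hasSum_tele (fun n : ℕ => 1 / (c + n) ^ 3)
    (by
      have h0 : Filter.Tendsto (fun n : ℕ => (c + (n:ℝ))⁻¹) atTop (nhds 0) :=
        (tendsto_add_nat_atTop c).inv_tendsto_atTop
      have := h0.pow 3
      norm_num at this
      simpa [one_div, inv_pow] using this)
    (fun n => by
      have h1 : (0:ℝ) < c + n := by positivity
      apply one_div_le_one_div_of_le (by positivity)
      have : c + (n:ℝ) ≤ c + ((n:ℕ)+1:ℕ) := by push_cast; linarith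
      calc (c + (n:ℝ))^3 ≤ (c + (((n:ℕ)+1:ℕ)):ℝ)^3 := by
            apply pow_le_pow_left₀ (by positivity) this
        _ = _ := rfl)
  simp only [Nat.cast_zero, add_zero] at h
  convert h using 2 with n
  push_cast; ring

lemma S_le' {x : ℝ} (hx : 1 / 2 < x) : S x ≤ 1 / (x - 1 / 2) := by
  have hx0 : 0 < x := by linarith
  have hc : 0 < x - 1/2 := by linarith
  have h1 := tele1 (x - 1/2) hc
  rw [S_def, ← h1.tsum_eq]
  apply Summable.tsum_le_tsum _ (summable_S hx0) h1.summable
  intro n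
  have hn : (0:ℝ) ≤ n := Nat.cast_nonneg n
  have e1 : x - 1/2 + (n:ℝ) = (x + n) - 1/2 := by ring
  have e2 : x - 1/2 + (n:ℝ) + 1 = (x + n) + 1/2 := by ring
  rw [e2, e1]
  have ht : 1/2 < x + (n:ℝ) := by linarith
  revert ht; generalize x + (n:ℝ) = t; intro ht
  have h2 : (0:ℝ) < t - 1/2 := by linarith
  have h3 : (0:ℝ) < t + 1/2 := by linarith
  have n1 : t - 1/2 ≠ 0 := by linarith
  have n2 : t + 1/2 ≠ 0 := by linarith
  have n4 : t^2 - 1/4 ≠ 0 := by nlinarith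
  have key : 1/(t-1/2) - 1/(t+1/2) = 1/(t^2 - 1/4) := by
    rw [div_sub_div _ _ n1 n2, div_eq_div_iff (mul_ne_zero n1 n2)
      (ne_of_gt (by nlinarith : (0:ℝ) < t^2 - 1/4))]
    ring
  rw [key]
  apply one_div_le_one_div_of_le (by nlinarith) (by nlinarith)

lemma S_le {x : ℝ} (hx : 1 ≤ x) :
    S x ≤ 1 / (x - 1 / 2) - (9 / 208) / (x - 1 / 2) ^ 3 := by
  have hx0 : 0 < x := by linarith
  have hc : 0 < x - 1/2 := by linarith
  have h1 := tele1 (x - 1/2) hc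
  have h3 := tele3 (x - 1/2) hc
  have hsum := h1.sub (h3.mul_left (9/208))
  rw [S_def, show (9:ℝ)/208/(x-1/2)^3 = (9/208)*(1/(x-1/2)^3) by ring, ← hsum.tsum_eq]
  apply Summable.tsum_le_tsum _ (summable_S hx0) hsum.summable
  intro n
  have hn : (0:ℝ) ≤ n := Nat.cast_nonneg n
  have e1 : x - 1/2 + (n:ℝ) = (x + n) - 1/2 := by ring
  have e2 : x - 1/2 + (n:ℝ) + 1 = (x + n) + 1/2 := by ring
  rw [e2, e1]
  have ht : 1 ≤ x + (n:ℝ) := by linarith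
  revert ht; generalize x + (n:ℝ) = t; intro ht
  have h2 : (0:ℝ) < t - 1/2 := by linarith
  have h3' : (0:ℝ) < t + 1/2 := by linarith
  have ht2 : (0:ℝ) < t := by linarith
  have n1 : t - 1/2 ≠ 0 := by linarith
  have n2 : t + 1/2 ≠ 0 := by linarith
  have e3 : 1/(t-1/2) - 1/(t+1/2) = 1/(t^2 - 1/4) := by
    rw [div_sub_div _ _ n1 n2, div_eq_div_iff (mul_ne_zero n1 n2)
      (ne_of_gt (by nlinarith : (0:ℝ) < t^2 - 1/4))]
    ring
  have e4 : 1/(t-1/2)^3 - 1/(t+1/2)^3 = (3*t^2+1/4)/(t^2-1/4)^3 := by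
    rw [div_sub_div _ _ (pow_ne_zero 3 n1) (pow_ne_zero 3 n2),
      div_eq_div_iff (mul_ne_zero (pow_ne_zero 3 n1) (pow_ne_zero 3 n2))
        (pow_ne_zero 3 (ne_of_gt (by nlinarith : (0:ℝ) < t^2 - 1/4)))]
    ring
  rw [e3, e4]
  have hu : 1 ≤ t^2 := by nlinarith
  revert hu; generalize t^2 = u; intro hu
  have hA : (0:ℝ) < u - 1/4 := by linarith
  have hu0 : (0:ℝ) < u := by linarith
  rw [show (9:ℝ)/208*((3*u+1/4)/(u-1/4)^3) = (9/208*(3*u+1/4))/(u-1/4)^3 by ring,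
    div_sub_div _ _ hA.ne' (by positivity : ((u-1/4)^3:ℝ) ≠ 0),
    div_le_div_iff₀ (by positivity) (by positivity)]
  have hfac : (0:ℝ) ≤ (u - 1) * (25/52*u - 13/208) :=
    mul_nonneg (by linarith) (by nlinarith)
  nlinarith [mul_nonneg hA.le hfac, sq_nonneg (u-1/4), mul_pos hA (mul_pos hA hA)]

lemma le_S {x : ℝ} (hx : 1 ≤ x) :
    1 / (x - 1 / 2) - (1 / 12) / (x - 1 / 2) ^ 3 ≤ S x := by
  have hx0 : 0 < x := by linarith
  have hc : 0 < x - 1/2 := by linarith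
  have h1 := tele1 (x - 1/2) hc
  have h3 := tele3 (x - 1/2) hc
  have hsum := h1.sub (h3.mul_left (1/12))
  rw [S_def, show (1:ℝ)/12/(x-1/2)^3 = (1/12)*(1/(x-1/2)^3) by ring, ← hsum.tsum_eq]
  apply Summable.tsum_le_tsum _ hsum.summable (summable_S hx0)
  intro n
  have hn : (0:ℝ) ≤ n := Nat.cast_nonneg n
  have e1 : x - 1/2 + (n:ℝ) = (x + n) - 1/2 := by ring
  have e2 : x - 1/2 + (n:ℝ) + 1 = (x + n) + 1/2 := by ring
  rw [e2, e1]
  have ht : 1 ≤ x + (n:ℝ) := by linarith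
  revert ht; generalize x + (n:ℝ) = t; intro ht
  have h2 : (0:ℝ) < t - 1/2 := by linarith
  have h3' : (0:ℝ) < t + 1/2 := by linarith
  have ht2 : (0:ℝ) < t := by linarith
  have n1 : t - 1/2 ≠ 0 := by linarith
  have n2 : t + 1/2 ≠ 0 := by linarith
  have e3 : 1/(t-1/2) - 1/(t+1/2) = 1/(t^2 - 1/4) := by
    rw [div_sub_div _ _ n1 n2, div_eq_div_iff (mul_ne_zero n1 n2)
      (ne_of_gt (by nlinarith : (0:ℝ) < t^2 - 1/4))]
    ring
  have e4 : 1/(t-1/2)^3 - 1/(t+1/2)^3 = (3*t^2+1/4)/(t^2-1/4)^3 := by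
    rw [div_sub_div _ _ (pow_ne_zero 3 n1) (pow_ne_zero 3 n2),
      div_eq_div_iff (mul_ne_zero (pow_ne_zero 3 n1) (pow_ne_zero 3 n2))
        (pow_ne_zero 3 (ne_of_gt (by nlinarith : (0:ℝ) < t^2 - 1/4)))]
    ring
  rw [e3, e4]
  have hu : 1 ≤ t^2 := by nlinarith
  revert hu; generalize t^2 = u; intro hu
  have hA : (0:ℝ) < u - 1/4 := by linarith
  have hu0 : (0:ℝ) < u := by linarith
  rw [show (1:ℝ)/12*((3*u+1/4)/(u-1/4)^3) = (1/12*(3*u+1/4))/(u-1/4)^3 by ring,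
    div_sub_div _ _ hA.ne' (by positivity : ((u-1/4)^3:ℝ) ≠ 0),
    div_le_div_iff₀ (by positivity) (by positivity)]
  have hfac : (0:ℝ) ≤ (u - 1/4) * (7/48*u - 1/64) :=
    mul_nonneg hA.le (by nlinarith)
  nlinarith [hfac, sq_nonneg (u-1/4), mul_pos hA (mul_pos hA hA)]

lemma log_ratio_tendsto (a b : ℝ) :
    Filter.Tendsto (fun y : ℝ => Real.log (y + a) - Real.log (y + b)) atTop (nhds 0) := by
  have h1 : Filter.Tendsto (fun y : ℝ => 1 + (a - b) / (y + b)) atTop (nhds 1) := by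
    have := Filter.Tendsto.div_atTop (tendsto_const_nhds (x := a - b))
      (tendsto_atTop_add_const_right atTop b tendsto_id)
    simpa using tendsto_const_nhds.add this
  have h2 : Filter.Tendsto (fun y : ℝ => Real.log (1 + (a - b) / (y + b))) atTop (nhds 0) := by
    have := (Real.continuousAt_log (by norm_num : (1:ℝ) ≠ 0)).tendsto.comp h1
    simpa [Function.comp_def] using this
  apply h2.congr'
  filter_upwards [eventually_gt_atTop (|a| + |b| + 1)] with y hy
  have hya : 0 < y + a := by
    have := neg_abs_le a; have := abs_nonneg b; linarith
  have hyb : 0 < y + b := by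
    have := neg_abs_le b; have := abs_nonneg a; linarith
  rw [show 1 + (a - b) / (y + b) = (y + a) / (y + b) from by field_simp; ring,
    Real.log_div hya.ne' hyb.ne']

lemma summable_g {y : ℝ} (hy : 0 < y) :
    Summable (fun n : ℕ => |1 / ((n:ℝ) + 1) - 1 / ((n:ℝ) + y)|) := by
  have hbase : Summable (fun n : ℕ => 1 / ((n : ℝ) + 1) ^ 2) := by
    have := Real.summable_one_div_nat_pow.mpr (by norm_num : 1 < 2)
    simpa using (summable_nat_add_iff 1).mpr this
  set c := min y 1 with hc
  have hc0 : 0 < c := lt_min hy one_pos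
  refine Summable.of_nonneg_of_le (fun n => abs_nonneg _) (fun n => ?_)
    (hbase.mul_left (|y - 1| / c))
  have hn : (0:ℝ) ≤ n := Nat.cast_nonneg n
  have h1 : (0:ℝ) < (n:ℝ) + 1 := by linarith
  have h2 : (0:ℝ) < (n:ℝ) + y := by linarith
  have key : 1 / ((n:ℝ) + 1) - 1 / ((n:ℝ) + y) = (y - 1) / (((n:ℝ) + 1) * ((n:ℝ) + y)) := by
    field_simp
    ring
  rw [key, abs_div, abs_of_pos (by positivity : (0:ℝ) < ((n:ℝ)+1) * ((n:ℝ)+y))]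
  rw [div_mul_div_comm, mul_one]
  apply div_le_div_of_nonneg_left (abs_nonneg _) (by positivity)
  have hcn : c * (((n:ℝ) + 1) ^ 2) ≤ ((n:ℝ) + 1) * ((n:ℝ) + y) := by
    have hcy : c ≤ y := min_le_left _ _
    have hc1 : c ≤ 1 := min_le_right _ _
    have : c * ((n:ℝ) + 1) ≤ (n:ℝ) + y := by
      rcases le_or_gt y 1 with h | h
      · have : c = y := min_eq_left h
        rw [this]; nlinarith
      · have : c = 1 := min_eq_right h.le
        rw [this]; nlinarith
    nlinarith
  linarith

lemma hasSum_psi {y : ℝ} (hy : 0 < y) :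
    HasSum (fun n : ℕ => 1 / ((n:ℝ) + 1) - 1 / ((n:ℝ) + y)) (psi y - psi 1) := by
  rw [hasSum_iff_tendsto_nat_of_summable_norm
    (by simpa [Real.norm_eq_abs] using summable_g hy)]
  have hps : ∀ N : ℕ, ∑ n ∈ range N, (1 / ((n:ℝ) + 1) - 1 / ((n:ℝ) + y))
      = (psi y - psi 1) + (psi (1 + N) - psi (y + N)) := by
    intro N
    have h1 := psi_add_nat one_pos N
    have h2 := psi_add_nat hy N
    rw [sum_sub_distrib]
    have e1 : ∑ n ∈ range N, 1 / ((n:ℝ) + 1) = psi (1 + N) - psi 1 := by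
      rw [h1]; rw [add_sub_cancel_left]
      apply sum_congr rfl; intro k _; rw [add_comm]
    have e2 : ∑ n ∈ range N, 1 / ((n:ℝ) + y) = psi (y + N) - psi y := by
      rw [h2]; rw [add_sub_cancel_left]
      apply sum_congr rfl; intro k _; rw [add_comm]
    rw [e1, e2]; ring
  simp only [hps]
  have hE : Filter.Tendsto (fun N : ℕ => psi (1 + N) - psi (y + N)) atTop (nhds 0) := by
    have hlow : ∀ᶠ N : ℕ in atTop, Real.log ((N:ℝ) + 0) - Real.log ((N:ℝ) + y)
        ≤ psi (1 + N) - psi (y + N) := by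
      filter_upwards [eventually_ge_atTop 1] with N hN
      have hN0 : (0:ℝ) < N := by exact_mod_cast hN
      have l1 : Real.log (N:ℝ) ≤ psi (1 + N) := by
        have := log_le_psi hN0
        rwa [add_comm] at this
      have l2 : psi (y + N) ≤ Real.log (y + N) := psi_le_log (by positivity)
      have : Real.log ((N:ℝ) + y) = Real.log (y + N) := by rw [add_comm]
      rw [add_zero, this]
      linarith
    have hhigh : ∀ᶠ N : ℕ in atTop, psi (1 + N) - psi (y + N)
        ≤ Real.log ((N:ℝ) + 1) - Real.log ((N:ℝ) + (y - 1)) := by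
      filter_upwards [eventually_ge_atTop 1] with N hN
      have hN0 : (0:ℝ) < N := by exact_mod_cast hN
      have l1 : psi (1 + N) ≤ Real.log (1 + N) := psi_le_log (by positivity)
      have hN1 : (1:ℝ) ≤ N := by exact_mod_cast hN
      have l2 : Real.log (y + N - 1) ≤ psi (y + N) := by
        have h : (0:ℝ) < y + N - 1 := by linarith
        have := log_le_psi h
        rw [show y + (N:ℝ) - 1 + 1 = y + N by ring] at this
        exact this
      have e1 : Real.log ((N:ℝ) + 1) = Real.log (1 + N) := by rw [add_comm]
      have e2 : Real.log ((N:ℝ) + (y - 1)) = Real.log (y + N - 1) := by ring_nf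
      rw [e1, e2]
      linarith
    have t1 : Filter.Tendsto (fun N : ℕ => Real.log ((N:ℝ) + 0) - Real.log ((N:ℝ) + y))
        atTop (nhds 0) := (log_ratio_tendsto 0 y).comp tendsto_natCast_atTop_atTop
    have t2 : Filter.Tendsto (fun N : ℕ => Real.log ((N:ℝ) + 1) - Real.log ((N:ℝ) + (y - 1)))
        atTop (nhds 0) := (log_ratio_tendsto 1 (y - 1)).comp tendsto_natCast_atTop_atTop
    exact tendsto_of_tendsto_of_tendsto_of_le_of_le' t1 t2 hlow hhigh
  have hfin := (tendsto_const_nhds (x := psi y - psi 1)).add hE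
  simpa using hfin

lemma hasDerivAt_psi {x : ℝ} (hx : 0 < x) : HasDerivAt psi (S x) x := by
  have hs : IsOpen (Ioi (x / 2)) := isOpen_Ioi
  have hx2 : 0 < x / 2 := by linarith
  have hF' : TendstoUniformlyOn
      (fun (t : Finset ℕ) (y : ℝ) => ∑ n ∈ t, 1 / (y + n) ^ 2)
      (fun y => ∑' n : ℕ, 1 / (y + n) ^ 2) atTop (Ioi (x / 2)) := by
    apply tendstoUniformlyOn_tsum (summable_S hx2)
    intro n y hy
    rw [Set.mem_Ioi] at hy
    have h1 : (0:ℝ) < x / 2 + n := by positivity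
    have h2 : (0:ℝ) < y + n := by linarith
    rw [Real.norm_eq_abs, abs_of_pos (by positivity)]
    apply div_le_div_of_nonneg_left (by norm_num) (by positivity)
    apply pow_le_pow_left₀ h1.le (by linarith)
  have hF : ∀ᶠ (t : Finset ℕ) in atTop, ∀ y ∈ Ioi (x / 2),
      HasDerivAt (fun z => psi 1 + ∑ n ∈ t, (1 / ((n:ℝ) + 1) - 1 / ((n:ℝ) + z)))
        (∑ n ∈ t, 1 / (y + n) ^ 2) y := by
    apply Filter.Eventually.of_forall
    intro t y hy
    rw [Set.mem_Ioi] at hy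
    have hy0 : 0 < y := lt_trans hx2 hy
    apply HasDerivAt.const_add
    have : ∀ n ∈ t, HasDerivAt (fun z => 1 / ((n:ℝ) + 1) - 1 / ((n:ℝ) + z))
        (1 / (y + n) ^ 2) y := by
      intro n _
      have hne : ((n:ℝ) + y) ≠ 0 := by positivity
      have h1 : HasDerivAt (fun z : ℝ => (n:ℝ) + z) 1 y := (hasDerivAt_id y).const_add _
      have h2 := (h1.fun_inv hne)
      have h3 := h2.const_sub (1 / ((n:ℝ) + 1))
      have he : (fun z : ℝ => 1 / ((n:ℝ) + 1) - 1 / ((n:ℝ) + z))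
          = (fun z : ℝ => 1 / ((n:ℝ) + 1) - ((n:ℝ) + z)⁻¹) := by
        funext z; simp [one_div]
      rw [he]
      refine h3.congr_deriv ?_
      rw [add_comm y (n:ℝ)]
      ring
    exact HasDerivAt.fun_sum this
  have hfg : ∀ y ∈ Ioi (x / 2), Filter.Tendsto
      (fun t : Finset ℕ => psi 1 + ∑ n ∈ t, (1 / ((n:ℝ) + 1) - 1 / ((n:ℝ) + y)))
      atTop (nhds (psi y)) := by
    intro y hy
    rw [Set.mem_Ioi] at hy
    have hy0 : 0 < y := lt_trans hx2 hy
    have h := hasSum_psi hy0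
    have ht : Filter.Tendsto (fun t : Finset ℕ =>
        ∑ n ∈ t, (1 / ((n:ℝ) + 1) - 1 / ((n:ℝ) + y))) atTop (nhds (psi y - psi 1)) := h
    have := (tendsto_const_nhds (x := psi 1)).add ht
    rw [show psi y = psi 1 + (psi y - psi 1) by ring]
    exact this
  have hmem : x ∈ Ioi (x / 2) := by rw [Set.mem_Ioi]; linarith
  have := hasDerivAt_of_tendstoUniformlyOn hs hF' hF hfg hmem
  exact this

noncomputable def phi (y : ℝ) : ℝ :=
  psi y - Real.log (y - 1 / 2) - (1 / 24) / (y - 1 / 2) ^ 2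

lemma hasDerivAt_phi {y : ℝ} (hy : 1 / 2 < y) :
    HasDerivAt phi (S y - 1 / (y - 1 / 2) + (1 / 12) / (y - 1 / 2) ^ 3) y := by
  have hy0 : 0 < y := by linarith
  have hyp : 0 < y - 1 / 2 := by linarith
  have hne : y - 1 / 2 ≠ 0 := hyp.ne'
  have h1 : HasDerivAt (fun z : ℝ => Real.log (z - 1 / 2)) (1 / (y - 1 / 2)) y := by
    have := ((hasDerivAt_id y).sub_const (1 / 2)).log hne
    simpa using this
  have h2 : HasDerivAt (fun z : ℝ => (1 / 24) / (z - 1 / 2) ^ 2)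
      (-(1 / 12) / (y - 1 / 2) ^ 3) y := by
    have hb : HasDerivAt (fun z : ℝ => (z - 1 / 2) ^ 2) (2 * (y - 1 / 2)) y := by
      have := ((hasDerivAt_id y).sub_const (1 / 2)).fun_pow 2
      simpa using this
    have hinv := hb.fun_inv (pow_ne_zero 2 hne)
    have hmul := hinv.const_mul ((1:ℝ) / 24)
    have hfn : (fun z : ℝ => (1:ℝ) / 24 * ((z - 1 / 2) ^ 2)⁻¹)
        = (fun z : ℝ => (1 / 24) / (z - 1 / 2) ^ 2) := by
      funext z; rw [mul_comm, ← div_eq_inv_mul]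
    rw [hfn] at hmul
    have hval : (1:ℝ) / 24 * (-(2 * (y - 1 / 2)) / ((y - 1 / 2) ^ 2) ^ 2)
        = -(1 / 12) / (y - 1 / 2) ^ 3 := by
      rw [show (1:ℝ) / 24 * (-(2 * (y - 1 / 2)) / ((y - 1 / 2) ^ 2) ^ 2)
          = (1 / 24 * -(2 * (y - 1 / 2))) / ((y - 1 / 2) ^ 2) ^ 2 from mul_div_assoc' _ _ _,
        div_eq_div_iff (by positivity) (pow_ne_zero 3 hne)]
      ring
    rwa [hval] at hmul
  have := ((hasDerivAt_psi hy0).fun_sub h1).fun_sub h2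
  refine this.congr_deriv ?_
  ring

lemma phi_tendsto : Filter.Tendsto phi atTop (nhds 0) := by
  have part1 : Filter.Tendsto (fun y : ℝ => psi y - Real.log (y - 1 / 2)) atTop (nhds 0) := by
    have t1 := log_ratio_tendsto (-1) (-(1 / 2))
    have t2 := log_ratio_tendsto 0 (-(1 / 2))
    apply tendsto_of_tendsto_of_tendsto_of_le_of_le' t1 t2
    · filter_upwards [eventually_ge_atTop (2:ℝ)] with y hy
      have h0 : (0:ℝ) < y - 1 := by linarith
      have := log_le_psi h0
      rw [show y - 1 + 1 = y by ring] at this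
      have e : y + -1 = y - 1 := by ring
      have e2 : y + -(1/2) = y - 1/2 := by ring
      rw [e, e2]
      linarith
    · filter_upwards [eventually_ge_atTop (2:ℝ)] with y hy
      have h0 : (0:ℝ) < y := by linarith
      have := psi_le_log h0
      have e2 : y + -(1/2) = y - 1/2 := by ring
      rw [add_zero, e2]
      linarith
  have part2 : Filter.Tendsto (fun y : ℝ => (1 / 24) / (y - 1 / 2) ^ 2) atTop (nhds 0) := by
    apply Filter.Tendsto.div_atTop (tendsto_const_nhds (x := (1:ℝ)/24))
    exact (tendsto_pow_atTop (by norm_num : 2 ≠ 0)).comp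
      (tendsto_atTop_add_const_right atTop (-(1/2)) tendsto_id)
  have := part1.sub part2
  simp only [sub_zero] at this
  apply this.congr'
  filter_upwards with y
  unfold phi; ring

lemma phi_nonpos {x : ℝ} (hx : 1 ≤ x) : phi x ≤ 0 := by
  have hmono : MonotoneOn phi (Ici (1:ℝ)) := by
    apply monotoneOn_of_deriv_nonneg (convex_Ici 1)
    · intro y hy
      rw [Set.mem_Ici] at hy
      exact (hasDerivAt_phi (by linarith)).continuousAt.continuousWithinAt
    · intro y hy
      rw [interior_Ici, Set.mem_Ioi] at hy
      exact (hasDerivAt_phi (by linarith)).differentiableAt.differentiableWithinAt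
    · intro y hy
      rw [interior_Ici, Set.mem_Ioi] at hy
      rw [(hasDerivAt_phi (by linarith)).deriv]
      have := le_S (le_of_lt hy)
      linarith
  apply ge_of_tendsto phi_tendsto
  filter_upwards [eventually_ge_atTop x, eventually_ge_atTop (1:ℝ)] with y hy hy1
  exact hmono (Set.mem_Ici.mpr hx) (Set.mem_Ici.mpr hy1) hy

lemma psi_le {x : ℝ} (hx : 1 ≤ x) :
    psi x ≤ Real.log (x - 1 / 2) + (1 / 24) / (x - 1 / 2) ^ 2 := by
  have := phi_nonpos hx
  unfold phi at this
  linarith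

lemma exp_key {s : ℝ} (hs : 1 ≤ s) : 1 + s + s ^ 2 / 2 < Real.exp (47 / 48 * s) := by
  have h0 : (0:ℝ) ≤ 47 / 48 * s := by linarith
  have hsum := Real.sum_le_exp_of_nonneg h0 5
  have hexp : ∑ i ∈ range 5, (47 / 48 * s) ^ i / (Nat.factorial i)
      = 1 + 47/48*s + (47/48*s)^2/2 + (47/48*s)^3/6 + (47/48*s)^4/24 := by
    norm_num [Finset.sum_range_succ, Nat.factorial]
  rw [hexp] at hsum
  have h2 : s ≤ s^2 := by nlinarith
  have h3 : s^2 ≤ s^3 := by nlinarith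
  have h4 : s^3 ≤ s^4 := by nlinarith
  nlinarith

theorem main (x : ℝ) (hx : 0 < x) :
    deriv psi x * Real.exp (psi x) < 1 := by
  have hD : deriv psi x = S x := (hasDerivAt_psi hx).deriv
  rcases le_or_gt 1 x with hx1 | hx1
  · -- case x ≥ 1
    obtain ⟨y, hydef⟩ : ∃ y : ℝ, y = x - 1/2 := ⟨_, rfl⟩
    have hy : (1:ℝ)/2 ≤ y := by rw [hydef]; linarith
    have hy0 : (0:ℝ) < y := by linarith
    have hy2 : (1:ℝ)/4 ≤ y^2 := by nlinarith
    have hS : S x ≤ 1/y - (9/208)/y^3 := by rw [hydef]; exact S_le hx1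
    have hpsi : psi x ≤ Real.log y + (1/24)/y^2 := by rw [hydef]; exact psi_le hx1
    obtain ⟨s, hsdef⟩ : ∃ s : ℝ, s = (1/24)/y^2 := ⟨_, rfl⟩
    rw [← hsdef] at hpsi
    have hs0 : 0 < s := by rw [hsdef]; positivity
    have hs1 : s ≤ 1/6 := by
      rw [hsdef, div_le_div_iff₀ (by positivity) (by norm_num)]
      nlinarith
    have h1s : 0 < 1 - s := by linarith
    have hE : Real.exp (psi x) ≤ y * (1/(1-s)) := by
      calc Real.exp (psi x) ≤ Real.exp (Real.log y + s) := Real.exp_le_exp.mpr hpsi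
      _ = y * Real.exp s := by rw [Real.exp_add, Real.exp_log hy0]
      _ ≤ y * (1/(1-s)) := by
          apply mul_le_mul_of_nonneg_left _ hy0.le
          rw [show Real.exp s = (Real.exp (-s))⁻¹ by rw [Real.exp_neg, inv_inv], one_div]
          apply inv_anti₀ h1s
          linarith [Real.add_one_le_exp (-s)]
    have hB0 : (0:ℝ) ≤ 1/y - (9/208)/y^3 := by
      rw [sub_nonneg, div_le_div_iff₀ (by positivity) hy0]
      nlinarith
    calc deriv psi x * Real.exp (psi x) = S x * Real.exp (psi x) := by rw [hD]
    _ ≤ (1/y - (9/208)/y^3) * (y * (1/(1-s))) :=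
        mul_le_mul hS hE (Real.exp_nonneg _) hB0
    _ < 1 := by
        have hid : (1/y - (9/208)/y^3) * (y * (1/(1-s))) = (1 - (9/208)/y^2) / (1-s) := by
          rw [eq_div_iff h1s.ne']
          field_simp
        rw [hid, div_lt_one h1s, hsdef]
        have hv : (0:ℝ) < 1/y^2 := by positivity
        have e : (9:ℝ)/208/y^2 = 9/208 * (1/y^2) := by ring
        have e2 : (1:ℝ)/24/y^2 = 1/24 * (1/y^2) := by ring
        rw [e, e2]
        nlinarith
  · -- case x < 1
    have hx11 : (1:ℝ) ≤ x + 1 := by linarith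
    obtain ⟨Y, hYdef⟩ : ∃ Y : ℝ, Y = x + 1/2 := ⟨_, rfl⟩
    have hY0 : (0:ℝ) < Y := by rw [hYdef]; linarith
    have hrec : S x = 1/x^2 + S (x+1) := S_rec hx
    have hpsix : psi x = psi (x+1) - 1/x := by
      have := psi_rec hx; linarith
    have hSb : S (x+1) ≤ 1/Y := by
      have := S_le' (show (1:ℝ)/2 < x + 1 by linarith)
      rwa [show x + 1 - 1/2 = Y by rw [hYdef]; ring] at this
    have hpsib : psi (x+1) ≤ Real.log Y + (1/24)/Y^2 := by
      have := psi_le hx11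
      rwa [show x + 1 - 1/2 = Y by rw [hYdef]; ring] at this
    have hexpb : (1/24)/Y^2 ≤ 1/(48*x) := by
      have h2x : 2*x ≤ Y^2 := by rw [hYdef]; nlinarith [sq_nonneg (x - 1/2)]
      calc (1/24)/Y^2 ≤ (1/24)/(2*x) := by
            apply div_le_div_of_nonneg_left (by norm_num) (by linarith)
            exact h2x
      _ = 1/(48*x) := by ring
    have hE : Real.exp (psi x) ≤ Y * Real.exp (1/(48*x)) * Real.exp (-(1/x)) := by
      rw [hpsix, show psi (x+1) - 1/x = psi (x+1) + (-(1/x)) by ring, Real.exp_add]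
      apply mul_le_mul_of_nonneg_right _ (Real.exp_nonneg _)
      calc Real.exp (psi (x+1)) ≤ Real.exp (Real.log Y + (1/24)/Y^2) :=
            Real.exp_le_exp.mpr hpsib
      _ = Y * Real.exp ((1/24)/Y^2) := by rw [Real.exp_add, Real.exp_log hY0]
      _ ≤ Y * Real.exp (1/(48*x)) := by
          apply mul_le_mul_of_nonneg_left (Real.exp_le_exp.mpr hexpb) hY0.le
    have hP : 0 < 1/x^2 + S (x+1) := by
      have := S_pos (show (0:ℝ) < x + 1 by linarith)
      positivity
    have hP1 : 1/x^2 + S (x+1) ≤ 1/x^2 + 1/Y := by linarith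
    have step : deriv psi x * Real.exp (psi x)
        ≤ (1/x^2 + 1/Y) * (Y * Real.exp (1/(48*x)) * Real.exp (-(1/x))) := by
      rw [hD, hrec]
      apply mul_le_mul hP1 hE (Real.exp_nonneg _)
      have h1Y : 0 < 1/Y := by positivity
      positivity
    apply lt_of_le_of_lt step
    have hs : (1:ℝ) ≤ 1/x := by
      rw [le_div_iff₀ hx]; linarith
    have hkey := exp_key hs
    have hfac : (1/x^2 + 1/Y) * Y = 1 + 1/x + (1/x)^2/2 := by
      rw [hYdef]; field_simp; ring
    have hid : (1/x^2 + 1/Y) * (Y * Real.exp (1/(48*x)) * Real.exp (-(1/x)))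
        = (1 + 1/x + (1/x)^2/2) * Real.exp (-(47/48 * (1/x))) := by
      rw [show (1/x^2 + 1/Y) * (Y * Real.exp (1/(48*x)) * Real.exp (-(1/x)))
          = ((1/x^2 + 1/Y) * Y) * (Real.exp (1/(48*x)) * Real.exp (-(1/x))) from by ring,
        hfac, ← Real.exp_add]
      congr 2
      field_simp
      ring
    rw [hid, Real.exp_neg]
    calc (1 + 1/x + (1/x)^2/2) * (Real.exp (47/48 * (1/x)))⁻¹
        < Real.exp (47/48 * (1/x)) * (Real.exp (47/48 * (1/x)))⁻¹ := by
          apply mul_lt_mul_of_pos_right _ (by positivity)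
          calc 1 + 1/x + (1/x)^2/2 = 1 + (1/x) + (1/x)^2/2 := by ring
          _ < _ := hkey
    _ = 1 := mul_inv_cancel₀ (Real.exp_pos _).ne'

end TrigammaProof

theorem trigamma_mul_exp_psi_lt_one (x : ℝ) (hx : 0 < x) :
    deriv psi x * Real.exp (psi x) < 1 :=
  TrigammaProof.main x hx
end

section
/- For every x > 0, [ψ'(x)]² + ψ''(x) > 0, where ψ' and ψ'' are the first and second derivatives of the digamma function. -/
set_option maxHeartbeats 1000000
open Real Filter Set Finset Topology



/-! ### Auxiliary series definitions -/

/-- partial-sum approximants to log Gamma -/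
noncomputable def fseq (n : ℕ) (x : ℝ) : ℝ :=
  x * Real.log n + Real.log (Nat.factorial n) - ∑ k ∈ Finset.range (n + 1), Real.log (x + k)

noncomputable def fseqD (n : ℕ) (x : ℝ) : ℝ :=
  Real.log n - ∑ k ∈ Finset.range (n + 1), (x + k)⁻¹

noncomputable def fseqDD (n : ℕ) (x : ℝ) : ℝ :=
  ∑ k ∈ Finset.range (n + 1), ((x + k) ^ 2)⁻¹

noncomputable def fseqDDD (n : ℕ) (x : ℝ) : ℝ :=
  ∑ k ∈ Finset.range (n + 1), -(2 * ((x + k) ^ 3)⁻¹)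

noncomputable def dig (x : ℝ) : ℝ :=
  -Real.eulerMascheroniConstant + (-x⁻¹ + ∑' k : ℕ, (((k : ℝ) + 1)⁻¹ - (x + ((k : ℝ) + 1))⁻¹))

noncomputable def trig (x : ℝ) : ℝ := ∑' k : ℕ, ((x + (k : ℝ)) ^ 2)⁻¹

noncomputable def tet (x : ℝ) : ℝ := ∑' k : ℕ, -(2 * ((x + (k : ℝ)) ^ 3)⁻¹)

/-! ### Basic positivity / summability -/

lemma min_mul_le (y : ℝ) (hy : 0 < y) (k : ℕ) : min y 1 * ((k : ℝ) + 1) ≤ y + k := by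
  have h1 : min y 1 ≤ y := min_le_left _ _
  have h2 : min y 1 ≤ 1 := min_le_right _ _
  have hk : (0 : ℝ) ≤ k := Nat.cast_nonneg k
  nlinarith

lemma summable_base (p : ℕ) (hp : 1 < p) : Summable (fun k : ℕ => (((k : ℝ) + 1) ^ p)⁻¹) := by
  have := (summable_nat_add_iff (f := fun n : ℕ => 1 / (n : ℝ) ^ p) 1).mpr
    (summable_one_div_nat_pow.mpr hp)
  refine this.congr fun k => ?_
  push_cast
  rw [one_div]

lemma summable_inv_pow (y : ℝ) (hy : 0 < y) (p : ℕ) (hp : 1 < p) :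
    Summable (fun k : ℕ => ((y + (k : ℝ)) ^ p)⁻¹) := by
  have hm : 0 < min y 1 := lt_min hy one_pos
  refine Summable.of_nonneg_of_le (fun k => by positivity) (fun k => ?_)
    (((summable_base p hp).mul_left ((min y 1 ^ p)⁻¹)))
  have h1 : min y 1 * ((k : ℝ) + 1) ≤ y + k := min_mul_le y hy k
  have h2 : (0 : ℝ) < min y 1 * ((k : ℝ) + 1) := by positivity
  have h3 : (min y 1 * ((k : ℝ) + 1)) ^ p ≤ (y + k) ^ p := pow_le_pow_left₀ h2.le h1 p
  have h4 : (0 : ℝ) < (min y 1 * ((k : ℝ) + 1)) ^ p := by positivity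
  calc ((y + (k : ℝ)) ^ p)⁻¹ ≤ ((min y 1 * ((k : ℝ) + 1)) ^ p)⁻¹ := by
        exact inv_anti₀ h4 h3
    _ = (min y 1 ^ p)⁻¹ * (((k : ℝ) + 1) ^ p)⁻¹ := by
        rw [mul_pow, mul_inv]


noncomputable def G1 (t : ℝ) : ℝ := t⁻¹ + (2 * t ^ 2)⁻¹ + (6 * t ^ 3)⁻¹ - (30 * t ^ 5)⁻¹
noncomputable def H1 (t : ℝ) : ℝ := (t ^ 2)⁻¹ + (t ^ 3)⁻¹ + (2 * t ^ 4)⁻¹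
lemma G1_telescope' {t : ℝ} (ht : 0 < t) : G1 t - G1 (t + 1) ≤ (t ^ 2)⁻¹ := by
  have ht1 : (0 : ℝ) < t + 1 := by linarith
  have key : (t ^ 2)⁻¹ - (G1 t - G1 (t + 1)) =
      (1 + 5 * t + 5 * t ^ 2) / (30 * t ^ 5 * (t + 1) ^ 5) := by
    unfold G1
    field_simp
    ring
  nlinarith [key, div_nonneg (by nlinarith : (0:ℝ) ≤ 1 + 5 * t + 5 * t ^ 2)
    (by positivity : (0:ℝ) ≤ 30 * t ^ 5 * (t + 1) ^ 5)]

lemma H1_telescope {t : ℝ} (ht : 0 < t) : 2 * (t ^ 3)⁻¹ ≤ H1 t - H1 (t + 1) := by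
  have ht1 : (0 : ℝ) < t + 1 := by linarith
  have key : (H1 t - H1 (t + 1)) - 2 * (t ^ 3)⁻¹ =
      (1 + 2 * t) / (2 * t ^ 4 * (t + 1) ^ 4) := by
    unfold H1
    field_simp
    ring
  nlinarith [key, div_nonneg (by nlinarith : (0:ℝ) ≤ 1 + 2 * t)
    (by positivity : (0:ℝ) ≤ 2 * t ^ 4 * (t + 1) ^ 4)]




lemma tendsto_G1_zero : Tendsto G1 atTop (𝓝 0) := by
  have h : ∀ p : ℕ, 0 < p → ∀ c : ℝ, 0 < c → Tendsto (fun t : ℝ => (c * t ^ p)⁻¹) atTop (𝓝 0) := by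
    intro p hp c hc
    apply Tendsto.inv_tendsto_atTop
    exact Tendsto.const_mul_atTop hc (tendsto_pow_atTop hp.ne')
  have h0 : Tendsto (fun t : ℝ => t⁻¹) atTop (𝓝 0) := tendsto_inv_atTop_zero
  have := ((h0.add (h 2 two_pos 2 two_pos)).add (h 3 three_pos 6 (by norm_num))).sub
    (h 5 (by norm_num) 30 (by norm_num))
  have h2 : Tendsto (fun t : ℝ => t⁻¹ + (2 * t ^ 2)⁻¹ + (6 * t ^ 3)⁻¹ - (30 * t ^ 5)⁻¹)
      atTop (𝓝 0) := by simpa only [add_zero, sub_zero] using this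
  exact h2

lemma tendsto_H1_zero : Tendsto H1 atTop (𝓝 0) := by
  have h : ∀ p : ℕ, 0 < p → ∀ c : ℝ, 0 < c → Tendsto (fun t : ℝ => (c * t ^ p)⁻¹) atTop (𝓝 0) := by
    intro p hp c hc
    apply Tendsto.inv_tendsto_atTop
    exact Tendsto.const_mul_atTop hc (tendsto_pow_atTop hp.ne')
  have h1 : Tendsto (fun t : ℝ => (t ^ 2)⁻¹) atTop (𝓝 0) := by
    simpa using h 2 two_pos 1 one_pos
  have h2 : Tendsto (fun t : ℝ => (t ^ 3)⁻¹) atTop (𝓝 0) := by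
    simpa using h 3 three_pos 1 one_pos
  have := (h1.add h2).add (h 4 (by norm_num) 2 two_pos)
  have h2 : Tendsto (fun t : ℝ => (t ^ 2)⁻¹ + (t ^ 3)⁻¹ + (2 * t ^ 4)⁻¹)
      atTop (𝓝 0) := by simpa only [add_zero] using this
  exact h2

-- key strict inequality
lemma key_ineq {x : ℝ} (hx : 0 < x) :
    2 * (x ^ 3)⁻¹ + H1 (x + 1) < ((x ^ 2)⁻¹ + G1 (x + 1)) ^ 2 := by
  have hx1 : (0 : ℝ) < x + 1 := by linarith
  have key : ((x ^ 2)⁻¹ + G1 (x + 1)) ^ 2 - (2 * (x ^ 3)⁻¹ + H1 (x + 1)) =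
      (900 + 7200*x + 25440*x^2 + 52200*x^3 + 68851*x^4 + 61250*x^5 + 37715*x^6
        + 16270*x^7 + 4840*x^8 + 900*x^9 + 75*x^10)
        / (900 * x ^ 4 * (x + 1) ^ 10) := by
    unfold G1 H1
    field_simp
    ring
  nlinarith [key, div_pos (by positivity : (0:ℝ) < 900 + 7200*x + 25440*x^2 + 52200*x^3
      + 68851*x^4 + 61250*x^5 + 37715*x^6 + 16270*x^7 + 4840*x^8 + 900*x^9 + 75*x^10)
    (by positivity : (0:ℝ) < 900 * x ^ 4 * (x + 1) ^ 10)]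


lemma tsum_ge_of_telescope {f g : ℕ → ℝ} (hf : Summable f)
    (hle : ∀ k, g k - g (k + 1) ≤ f k) (hg : Tendsto g atTop (𝓝 0)) :
    g 0 ≤ ∑' k, f k := by
  have h1 : Tendsto (fun n : ℕ => g 0 - g n) atTop (𝓝 (g 0)) := by
    simpa using (tendsto_const_nhds (x := g 0) (f := atTop)).sub hg
  have h2 := hf.hasSum.tendsto_sum_nat
  refine le_of_tendsto_of_tendsto' h1 h2 fun n => ?_
  calc g 0 - g n = ∑ k ∈ Finset.range n, (g k - g (k + 1)) := (Finset.sum_range_sub' g n).symm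
    _ ≤ ∑ k ∈ Finset.range n, f k := Finset.sum_le_sum fun k _ => hle k

lemma tsum_le_of_telescope {f g : ℕ → ℝ} (hf : Summable f)
    (hle : ∀ k, f k ≤ g k - g (k + 1)) (hg : Tendsto g atTop (𝓝 0)) :
    ∑' k, f k ≤ g 0 := by
  have h1 : Tendsto (fun n : ℕ => g 0 - g n) atTop (𝓝 (g 0)) := by
    simpa using (tendsto_const_nhds (x := g 0) (f := atTop)).sub hg
  have h2 := hf.hasSum.tendsto_sum_nat
  refine le_of_tendsto_of_tendsto' h2 h1 fun n => ?_
  calc ∑ k ∈ Finset.range n, f k ≤ ∑ k ∈ Finset.range n, (g k - g (k + 1)) :=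
        Finset.sum_le_sum fun k _ => hle k
    _ = g 0 - g n := Finset.sum_range_sub' g n

lemma tendsto_shift_zero {G : ℝ → ℝ} (hG : Tendsto G atTop (𝓝 0)) (y : ℝ) :
    Tendsto (fun n : ℕ => G (y + n)) atTop (𝓝 0) :=
  hG.comp (tendsto_atTop_add_const_left atTop y tendsto_natCast_atTop_atTop)

lemma trig_lower_aux {y : ℝ} (hy : 0 < y) : G1 y ≤ trig y := by
  have h := tsum_ge_of_telescope (f := fun k : ℕ => ((y + (k : ℝ)) ^ 2)⁻¹)
    (g := fun n : ℕ => G1 (y + n)) (summable_inv_pow y hy 2 one_lt_two)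
    (fun k => ?_) (tendsto_shift_zero tendsto_G1_zero y)
  · simpa [trig] using h
  · have hyk : (0 : ℝ) < y + k := by positivity
    have := G1_telescope' hyk
    have hcast : y + ((k : ℝ) + 1) = (y + k) + 1 := by ring
    simpa [Nat.cast_add, Nat.cast_one, hcast] using this

lemma cube_upper_aux {y : ℝ} (hy : 0 < y) :
    ∑' k : ℕ, 2 * ((y + (k : ℝ)) ^ 3)⁻¹ ≤ H1 y := by
  have hs : Summable (fun k : ℕ => 2 * ((y + (k : ℝ)) ^ 3)⁻¹) :=
    (summable_inv_pow y hy 3 (by norm_num)).mul_left 2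
  have h := tsum_le_of_telescope (f := fun k : ℕ => 2 * ((y + (k : ℝ)) ^ 3)⁻¹)
    (g := fun n : ℕ => H1 (y + n)) hs (fun k => ?_) (tendsto_shift_zero tendsto_H1_zero y)
  · simpa using h
  · have hyk : (0 : ℝ) < y + k := by positivity
    have := H1_telescope hyk
    have hcast : y + ((k : ℝ) + 1) = (y + k) + 1 := by ring
    simpa [Nat.cast_add, Nat.cast_one, hcast] using this

lemma trig_shift {x : ℝ} (hx : 0 < x) : trig x = (x ^ 2)⁻¹ + trig (x + 1) := by
  have hs : Summable (fun k : ℕ => ((x + (k : ℝ)) ^ 2)⁻¹) := summable_inv_pow x hx 2 one_lt_two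
  rw [trig, Summable.tsum_eq_zero_add hs]
  congr 1
  · norm_num
  · rw [trig]
    refine tsum_congr fun k => ?_
    push_cast
    ring_nf

lemma cube_shift {x : ℝ} (hx : 0 < x) :
    ∑' k : ℕ, 2 * ((x + (k : ℝ)) ^ 3)⁻¹
      = 2 * (x ^ 3)⁻¹ + ∑' k : ℕ, 2 * (((x + 1) + (k : ℝ)) ^ 3)⁻¹ := by
  have hs : Summable (fun k : ℕ => 2 * ((x + (k : ℝ)) ^ 3)⁻¹) :=
    (summable_inv_pow x hx 3 (by norm_num)).mul_left 2
  rw [Summable.tsum_eq_zero_add hs]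
  congr 1
  · norm_num
  · refine tsum_congr fun k => ?_
    push_cast
    ring_nf

lemma main_ineq {x : ℝ} (hx : 0 < x) :
    ∑' k : ℕ, 2 * ((x + (k : ℝ)) ^ 3)⁻¹ < (trig x) ^ 2 := by
  have hx1 : (0 : ℝ) < x + 1 := by linarith
  have hlow : (x ^ 2)⁻¹ + G1 (x + 1) ≤ trig x := by
    rw [trig_shift hx]
    exact add_le_add le_rfl (trig_lower_aux hx1)
  have hup : ∑' k : ℕ, 2 * ((x + (k : ℝ)) ^ 3)⁻¹ ≤ 2 * (x ^ 3)⁻¹ + H1 (x + 1) := by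
    rw [cube_shift hx]
    exact add_le_add le_rfl (cube_upper_aux hx1)
  have hpos : (0 : ℝ) < (x ^ 2)⁻¹ + G1 (x + 1) := by
    have h1 : (30 * (x + 1) ^ 5)⁻¹ ≤ (6 * (x + 1) ^ 3)⁻¹ := by
      apply inv_anti₀ (by positivity)
      nlinarith [sq_nonneg (x + 1), pow_pos hx1 3, pow_pos hx1 5]
    have h2 : (0 : ℝ) < (x + 1)⁻¹ := by positivity
    have h3 : (0 : ℝ) < (2 * (x + 1) ^ 2)⁻¹ := by positivity
    have h4 : (0 : ℝ) < (x ^ 2)⁻¹ := by positivity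
    unfold G1
    linarith
  calc ∑' k : ℕ, 2 * ((x + (k : ℝ)) ^ 3)⁻¹ ≤ 2 * (x ^ 3)⁻¹ + H1 (x + 1) := hup
    _ < ((x ^ 2)⁻¹ + G1 (x + 1)) ^ 2 := key_ineq hx
    _ ≤ (trig x) ^ 2 := by nlinarith [hlow, hpos]

lemma hasDerivAt_fseq (n : ℕ) {x : ℝ} (hx : 0 < x) : HasDerivAt (fseq n) (fseqD n x) x := by
  have hsum : HasDerivAt (fun y : ℝ => ∑ k ∈ Finset.range (n + 1), Real.log (y + k))
      (∑ k ∈ Finset.range (n + 1), (x + (k : ℝ))⁻¹) x := by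
    apply HasDerivAt.fun_sum
    intro k _
    have h1 : HasDerivAt (fun y : ℝ => y + (k : ℝ)) 1 x := (hasDerivAt_id x).add_const _
    have h2 := h1.log (by positivity : x + (k : ℝ) ≠ 0)
    simpa [one_div] using h2
  have h3 : HasDerivAt (fun y : ℝ => y * Real.log n + Real.log (Nat.factorial n))
      (Real.log n) x := by
    simpa using (hasDerivAt_mul_const (Real.log n)).add_const (Real.log (Nat.factorial n))
  exact h3.sub hsum

lemma hasDerivAt_fseqD (n : ℕ) {x : ℝ} (hx : 0 < x) : HasDerivAt (fseqD n) (fseqDD n x) x := by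
  have hsum : HasDerivAt (fun y : ℝ => ∑ k ∈ Finset.range (n + 1), (y + (k : ℝ))⁻¹)
      (∑ k ∈ Finset.range (n + 1), -(((x + (k : ℝ)) ^ 2)⁻¹)) x := by
    apply HasDerivAt.fun_sum
    intro k _
    have h1 : HasDerivAt (fun y : ℝ => y + (k : ℝ)) 1 x := (hasDerivAt_id x).add_const _
    have h2 := h1.fun_inv (by positivity : x + (k : ℝ) ≠ 0)
    simpa [one_div, neg_div] using h2
  have h := (hasDerivAt_const x (Real.log n)).sub hsum
  have e : (0 : ℝ) - ∑ k ∈ Finset.range (n + 1), -(((x + (k : ℝ)) ^ 2)⁻¹) = fseqDD n x := by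
    simp [fseqDD]
  exact e ▸ h

lemma hasDerivAt_fseqDD (n : ℕ) {x : ℝ} (hx : 0 < x) :
    HasDerivAt (fseqDD n) (fseqDDD n x) x := by
  apply HasDerivAt.fun_sum
  intro k _
  have h1 : HasDerivAt (fun y : ℝ => (y + (k : ℝ)) ^ 2) (2 * (x + (k : ℝ))) x := by
    simpa using ((hasDerivAt_id x).add_const (k : ℝ)).fun_pow 2
  have h2 := h1.inv (by positivity : (x + (k : ℝ)) ^ 2 ≠ 0)
  have e : -(2 * (x + (k : ℝ))) / ((x + (k : ℝ)) ^ 2) ^ 2 = -(2 * ((x + (k : ℝ)) ^ 3)⁻¹) := by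
    have hne : x + (k : ℝ) ≠ 0 := by positivity
    field_simp
  rwa [e] at h2

lemma tendstoUniformlyOn_shift {F : ℕ → ℝ → ℝ} {f : ℝ → ℝ} {s : Set ℝ}
    (h : TendstoUniformlyOn F f atTop s) :
    TendstoUniformlyOn (fun n => F (n + 1)) f atTop s :=
  fun u hu => (tendsto_add_atTop_nat 1).eventually (h u hu)

lemma tendstoUniformlyOn_const_seq {c : ℕ → ℝ} {L : ℝ} (h : Tendsto c atTop (𝓝 L))
    (s : Set ℝ) :
    TendstoUniformlyOn (fun n (_ : ℝ) => c n) (fun _ => L) atTop s := by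
  rw [Metric.tendstoUniformlyOn_iff]
  intro ε hε
  filter_upwards [Metric.tendsto_nhds.mp h ε hε] with n hn y _
  rwa [dist_comm] at hn

lemma tendstoUniformlyOn_const_fun (g : ℝ → ℝ) (s : Set ℝ) :
    TendstoUniformlyOn (fun _ : ℕ => g) g atTop s :=
  fun u hu => Eventually.of_forall fun _ y _ => refl_mem_uniformity hu

lemma locunif_of_Icc {F : ℕ → ℝ → ℝ} {f : ℝ → ℝ}
    (h : ∀ a b : ℝ, 0 < a → TendstoUniformlyOn F f atTop (Icc a b)) :
    TendstoLocallyUniformlyOn F f atTop (Ioi 0) := by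
  intro u hu x hx
  have hx0 : (0 : ℝ) < x := hx
  refine ⟨Icc (x / 2) (x + 1), ?_, h (x / 2) (x + 1) (by linarith) u hu⟩
  exact mem_nhdsWithin_of_mem_nhds (Icc_mem_nhds (by linarith) (by linarith))

lemma unif_fseqDD {a : ℝ} (b : ℝ) (ha : 0 < a) :
    TendstoUniformlyOn fseqDD trig atTop (Icc a b) := by
  have base := tendstoUniformlyOn_tsum_nat
    (f := fun (k : ℕ) (y : ℝ) => ((y + (k : ℝ)) ^ 2)⁻¹)
    (u := fun k : ℕ => ((a + (k : ℝ)) ^ 2)⁻¹)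
    (summable_inv_pow a ha 2 one_lt_two) (s := Icc a b) ?_
  · exact tendstoUniformlyOn_shift base
  · intro k y hy
    have hay : a ≤ y := hy.1
    have h1 : (0 : ℝ) < a + k := by positivity
    have h2 : (a + (k : ℝ)) ^ 2 ≤ (y + (k : ℝ)) ^ 2 := pow_le_pow_left₀ h1.le (by linarith) 2
    have h3 : (0 : ℝ) < (y + (k : ℝ)) ^ 2 := by nlinarith
    rw [Real.norm_eq_abs, abs_of_nonneg (by positivity)]
    exact inv_anti₀ (by positivity) h2

lemma unif_fseqDDD {a : ℝ} (b : ℝ) (ha : 0 < a) :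
    TendstoUniformlyOn fseqDDD tet atTop (Icc a b) := by
  have base := tendstoUniformlyOn_tsum_nat
    (f := fun (k : ℕ) (y : ℝ) => -(2 * ((y + (k : ℝ)) ^ 3)⁻¹))
    (u := fun k : ℕ => 2 * ((a + (k : ℝ)) ^ 3)⁻¹)
    ((summable_inv_pow a ha 3 (by norm_num)).mul_left 2) (s := Icc a b) ?_
  · exact tendstoUniformlyOn_shift base
  · intro k y hy
    have hay : a ≤ y := hy.1
    have h1 : (0 : ℝ) < a + k := by positivity
    have hy0 : (0 : ℝ) < y := lt_of_lt_of_le ha hay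
    have h2 : (a + (k : ℝ)) ^ 3 ≤ (y + (k : ℝ)) ^ 3 := pow_le_pow_left₀ h1.le (by linarith) 3
    rw [Real.norm_eq_abs, abs_neg, abs_of_nonneg (by positivity)]
    have := inv_anti₀ (by positivity : (0:ℝ) < (a + (k : ℝ)) ^ 3) h2
    linarith

lemma unif_fseqD {a : ℝ} (b : ℝ) (ha : 0 < a) :
    TendstoUniformlyOn fseqD dig atTop (Icc a b) := by
  set M := max b 1 with hM
  have hM1 : (1 : ℝ) ≤ M := le_max_right _ _
  have hser := tendstoUniformlyOn_tsum_nat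
    (f := fun (k : ℕ) (y : ℝ) => ((k : ℝ) + 1)⁻¹ - (y + ((k : ℝ) + 1))⁻¹)
    (u := fun k : ℕ => M * (((k : ℝ) + 1) ^ 2)⁻¹)
    ((summable_base 2 one_lt_two).mul_left M) (s := Icc a b) ?_
  · have hγ : Tendsto (fun n : ℕ => Real.log n - (harmonic n : ℝ)) atTop
        (𝓝 (-Real.eulerMascheroniConstant)) := by
      simpa [neg_sub] using Real.tendsto_harmonic_sub_log.neg
    have hconst := tendstoUniformlyOn_const_seq hγ (Icc a b)
    have hfun := tendstoUniformlyOn_const_fun (fun y : ℝ => -y⁻¹) (Icc a b)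
    have hcomb := hconst.add (hfun.add hser)
    refine (hcomb.congr ?_)
    filter_upwards with n
    intro y hy
    have hsplit : ∑ k ∈ Finset.range (n + 1), (y + (k : ℝ))⁻¹
        = y⁻¹ + ∑ k ∈ Finset.range n, (y + ((k : ℝ) + 1))⁻¹ := by
      rw [Finset.sum_range_succ']
      simp [add_comm]
    have hharm : (harmonic n : ℝ) = ∑ k ∈ Finset.range n, ((k : ℝ) + 1)⁻¹ := by
      rw [harmonic]
      push_cast
      rfl
    simp only [fseqD, Pi.add_apply]
    rw [hsplit, Finset.sum_sub_distrib, hharm]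
    ring
  · intro k y hy
    have hay : a ≤ y := hy.1
    have hyb : y ≤ b := hy.2
    have hy0 : (0 : ℝ) < y := lt_of_lt_of_le ha hay
    have hk1 : (0 : ℝ) < (k : ℝ) + 1 := by positivity
    have hyk : (0 : ℝ) < y + ((k : ℝ) + 1) := by positivity
    have e : ((k : ℝ) + 1)⁻¹ - (y + ((k : ℝ) + 1))⁻¹
        = y * ((((k : ℝ) + 1) * (y + ((k : ℝ) + 1)))⁻¹) := by
      field_simp
      ring
    show ‖((k : ℝ) + 1)⁻¹ - (y + ((k : ℝ) + 1))⁻¹‖ ≤ M * (((k : ℝ) + 1) ^ 2)⁻¹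
    rw [Real.norm_eq_abs, e, abs_of_nonneg (by positivity)]
    have h1 : y ≤ M := le_trans hyb (le_max_left _ _)
    have h2 : ((k : ℝ) + 1) ^ 2 ≤ ((k : ℝ) + 1) * (y + ((k : ℝ) + 1)) := by nlinarith
    have h3 := inv_anti₀ (by positivity : (0:ℝ) < ((k : ℝ) + 1) ^ 2) h2
    have h4 : (0:ℝ) ≤ (((k : ℝ) + 1) * (y + ((k : ℝ) + 1)))⁻¹ := by positivity
    calc y * ((((k : ℝ) + 1) * (y + ((k : ℝ) + 1)))⁻¹)
        ≤ M * ((((k : ℝ) + 1) * (y + ((k : ℝ) + 1)))⁻¹) := by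
          exact mul_le_mul_of_nonneg_right h1 h4
      _ ≤ M * (((k : ℝ) + 1) ^ 2)⁻¹ := by
          exact mul_le_mul_of_nonneg_left h3 (by linarith)

lemma fseq_tendsto {x : ℝ} (hx : 0 < x) :
    Tendsto (fun n => fseq n x) atTop (𝓝 (Real.log (Real.Gamma x))) := by
  have h1 := Real.GammaSeq_tendsto_Gamma x
  have h2 : Tendsto (fun n => Real.log (Real.GammaSeq x n)) atTop
      (𝓝 (Real.log (Real.Gamma x))) :=
    ((Real.continuousAt_log (Real.Gamma_pos_of_pos hx).ne').tendsto.comp h1)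
  refine h2.congr' ?_
  filter_upwards [eventually_ge_atTop 1] with n hn
  have hn0 : (0 : ℝ) < (n : ℝ) := by exact_mod_cast hn
  have hprod : (0 : ℝ) < ∏ j ∈ Finset.range (n + 1), (x + (j : ℝ)) :=
    Finset.prod_pos fun j _ => by positivity
  have hfact : (0 : ℝ) < (Nat.factorial n : ℝ) := by positivity
  have hrpow : (0 : ℝ) < (n : ℝ) ^ x := Real.rpow_pos_of_pos hn0 x
  rw [Real.GammaSeq, Real.log_div (by positivity) hprod.ne',
    Real.log_mul hrpow.ne' hfact.ne', Real.log_rpow hn0,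
    Real.log_prod (fun j _ => by positivity)]
  rfl

lemma locunif_fseqD : TendstoLocallyUniformlyOn fseqD dig atTop (Ioi 0) :=
  locunif_of_Icc fun a b ha => unif_fseqD b ha

lemma locunif_fseqDD : TendstoLocallyUniformlyOn fseqDD trig atTop (Ioi 0) :=
  locunif_of_Icc fun a b ha => unif_fseqDD b ha

lemma locunif_fseqDDD : TendstoLocallyUniformlyOn fseqDDD tet atTop (Ioi 0) :=
  locunif_of_Icc fun a b ha => unif_fseqDDD b ha

lemma hasDerivAt_logGamma {x : ℝ} (hx : 0 < x) :
    HasDerivAt (fun t : ℝ => Real.log (Real.Gamma t)) (dig x) x :=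
  hasDerivAt_of_tendstoLocallyUniformlyOn isOpen_Ioi locunif_fseqD
    (Eventually.of_forall fun n y hy => hasDerivAt_fseq n hy)
    (fun y hy => fseq_tendsto hy) hx

lemma hasDerivAt_dig {x : ℝ} (hx : 0 < x) : HasDerivAt dig (trig x) x :=
  hasDerivAt_of_tendstoLocallyUniformlyOn isOpen_Ioi locunif_fseqDD
    (Eventually.of_forall fun n y hy => hasDerivAt_fseqD n hy)
    (fun y hy => locunif_fseqD.tendsto_at hy) hx

lemma hasDerivAt_trig {x : ℝ} (hx : 0 < x) : HasDerivAt trig (tet x) x :=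
  hasDerivAt_of_tendstoLocallyUniformlyOn isOpen_Ioi locunif_fseqDDD
    (Eventually.of_forall fun n y hy => hasDerivAt_fseqDD n hy)
    (fun y hy => locunif_fseqDD.tendsto_at hy) hx

lemma psi_eq {x : ℝ} (hx : 0 < x) : psi x = dig x := (hasDerivAt_logGamma hx).deriv

lemma deriv_psi_eq {x : ℝ} (hx : 0 < x) : deriv psi x = trig x := by
  have hev : psi =ᶠ[𝓝 x] dig :=
    eventually_of_mem (isOpen_Ioi.mem_nhds (mem_Ioi.mpr hx)) fun y hy => psi_eq hy
  rw [hev.deriv_eq, (hasDerivAt_dig hx).deriv]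

theorem trigamma_sq_add_tetragamma_pos (x : ℝ) (hx : 0 < x) :
    (deriv psi x) ^ 2 + deriv (deriv psi) x > 0 := by
  have hev : deriv psi =ᶠ[𝓝 x] trig :=
    eventually_of_mem (isOpen_Ioi.mem_nhds (mem_Ioi.mpr hx)) fun y hy => deriv_psi_eq hy
  have h2 : deriv (deriv psi) x = tet x := by
    rw [hev.deriv_eq, (hasDerivAt_trig hx).deriv]
  have h3 : tet x = -∑' k : ℕ, 2 * ((x + (k : ℝ)) ^ 3)⁻¹ := by
    rw [tet]
    exact tsum_neg
  rw [deriv_psi_eq hx, h2, h3]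
  have := main_ineq hx
  linarith
end

section
/- The function f₃(u) = [1 + (1 − u)²]·e^u − 2 is strictly positive for every u ∈ (0, 1/2]. -/
open Real

theorem f3_pos (u : ℝ) (hu : u ∈ Set.Ioc (0 : ℝ) (1/2)) :
    0 < (1 + (1 - u)^2) * Real.exp u - 2 := by
  obtain ⟨h0, h1⟩ := hu
  have h : 1 + u + u ^ 2 / 2 ≤ Real.exp u := by
    have := Real.sum_le_exp_of_nonneg h0.le 3
    simp [Finset.sum_range_succ, Nat.factorial] at this
    linarith
  have hq : 0 < 1 + (1 - u)^2 := by positivity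
  nlinarith [pow_pos h0 4, mul_le_mul_of_nonneg_left h hq.le]
end

section
/- The function f(x) = ln(x + 1/2) + γ − [1 + ln(√e − 1) − ln(e^{1/(x+1)} − 1)] is increasing on [1, ∞), where γ is the Euler–Mascheroni constant. -/
open Real

lemma hasDerivF (x : ℝ) (hx : 1 ≤ x) :
    HasDerivAt (fun x : ℝ =>
      Real.log (x + 1/2) + Real.eulerMascheroniConstant -
        (1 + Real.log (Real.sqrt (Real.exp 1) - 1) -
          Real.log (Real.exp (1/(x + 1)) - 1)))
      (1/(x + 1/2) + Real.exp (1/(x+1)) * (-1/(x+1)^2) / (Real.exp (1/(x+1)) - 1)) x := by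
  have hx2 : (0:ℝ) < x + 1/2 := by linarith
  have hx1 : (0:ℝ) < x + 1 := by linarith
  have ht : 0 < 1/(x+1) := by positivity
  have he : 1 < Real.exp (1/(x+1)) := by
    have := Real.exp_lt_exp.mpr ht
    simpa using this
  have h1 : HasDerivAt (fun x : ℝ => x + 1/2) 1 x := (hasDerivAt_id x).add_const _
  have hlog1 : HasDerivAt (fun x : ℝ => Real.log (x + 1/2)) (1/(x+1/2)) x := h1.log hx2.ne'
  have h2 : HasDerivAt (fun x : ℝ => x + 1) 1 x := (hasDerivAt_id x).add_const _
  have hinv : HasDerivAt (fun x : ℝ => 1/(x+1)) (-1/(x+1)^2) x := by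
    simpa [one_div, Pi.inv_def] using h2.inv hx1.ne'
  have hexp : HasDerivAt (fun x : ℝ => Real.exp (1/(x+1)) - 1)
      (Real.exp (1/(x+1)) * (-1/(x+1)^2)) x := (hinv.exp).sub_const 1
  have hlog2 : HasDerivAt (fun x : ℝ => Real.log (Real.exp (1/(x+1)) - 1))
      (Real.exp (1/(x+1)) * (-1/(x+1)^2) / (Real.exp (1/(x+1)) - 1)) x :=
    hexp.log (by linarith)
  have := ((hlog1.add_const Real.eulerMascheroniConstant).sub
    ((hasDerivAt_const x (1 + Real.log (Real.sqrt (Real.exp 1) - 1))).sub hlog2))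
  exact this.congr_deriv (by ring)

theorem f_monotoneOn :
    MonotoneOn (fun x : ℝ =>
      Real.log (x + 1/2) + Real.eulerMascheroniConstant -
        (1 + Real.log (Real.sqrt (Real.exp 1) - 1) -
          Real.log (Real.exp (1/(x + 1)) - 1))) (Set.Ici (1 : ℝ)) := by
  apply monotoneOn_of_deriv_nonneg (convex_Ici 1)
  · exact fun x hx => (hasDerivF x hx).differentiableAt.continuousAt.continuousWithinAt
  · rw [interior_Ici]
    exact fun x hx => (hasDerivF x (le_of_lt hx)).differentiableAt.differentiableWithinAt
  · rw [interior_Ici]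
    intro x hx
    have hx' : (1:ℝ) ≤ x := le_of_lt hx
    rw [(hasDerivF x hx').deriv]
    set t : ℝ := 1/(x+1) with htdef
    have hx1 : (0:ℝ) < x + 1 := by linarith
    have ht : 0 < t := by positivity
    have htx : t * (x+1) = 1 := by rw [htdef]; field_simp
    have he : 1 < Real.exp t := by
      rw [show (1:ℝ) = Real.exp 0 from (Real.exp_zero).symm]
      exact Real.exp_lt_exp.mpr ht
    have hE : 1 + t + t^2/2 ≤ Real.exp t := Real.quadratic_le_exp_of_nonneg ht.le
    have key : 2 ≤ Real.exp t * (2 - 2*t + t^2) := by nlinarith [sq_nonneg (t^2), sq_nonneg t, ht.le]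
    have hne1 : ((x+1)^2:ℝ) ≠ 0 := by positivity
    have hne2 : Real.exp t - 1 ≠ 0 := by linarith
    have heq : Real.exp t * (-1/(x+1)^2) / (Real.exp t - 1)
        = -(Real.exp t / ((x+1)^2 * (Real.exp t - 1))) := by
      field_simp
    rw [heq, ← sub_eq_add_neg, sub_nonneg,
      div_le_div_iff₀ (mul_pos (by positivity) (by linarith)) (by linarith)]
    have hxt : x = 1/t - 1 := by
      rw [htdef]
      field_simp
      ring
    rw [hxt]
    have htne : t ≠ 0 := ht.ne'
    field_simp
    nlinarith [key, mul_pos ht ht, Real.exp_pos t, ht]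
end

section
/- For every natural number n ≥ 3, ln(n + 1/2) + γ > 1 + ln(√e − 1) − ln(e^{1/(n+1)} − 1); that is, for n ≥ 3 the lower bound ln(n + 1/2) + γ for the n-th harmonic number H_n is better than the lower bound 1 + ln(√e − 1) − ln(e^{1/(n+1)} − 1). -/
set_option maxHeartbeats 1000000

open Real Filter

-- log(1+t) ≤ t - t^2/(2(1+t)) for 0 < t ≤ 1/16
lemma aux_log_one_add_le {t : ℝ} (ht : 0 < t) (ht' : t ≤ 1/16) :
    Real.log (1 + t) ≤ t - t^2 / (2*(1+t)) := by
  have h := Real.abs_log_sub_add_sum_range_le (x := -t) (by rw [abs_neg, abs_of_pos ht]; linarith) 3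
  rw [abs_neg, abs_of_pos ht] at h
  have hsum : (∑ i ∈ Finset.range 3, (-t) ^ (i + 1) / ((i:ℝ) + 1)) = -t + t^2/2 - t^3/3 := by
    simp [Finset.sum_range_succ]; ring
  rw [hsum] at h
  have e : 1 - (-t) = 1 + t := by ring
  rw [e] at h
  have h1 : Real.log (1+t) ≤ t - t^2/2 + t^3/3 + t^4/(1-t) := by
    have := (abs_le.mp h).2
    linarith
  have hA : t^4/(1-t) ≤ t^4 * (16/15) := by
    rw [div_le_iff₀ (by linarith)]
    nlinarith [pow_pos ht 4]
  have hB : t^3 * (8/17) ≤ t^3/(2*(1+t)) := by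
    rw [le_div_iff₀ (by linarith)]
    nlinarith [pow_pos ht 3]
  have key : t^2/2 - t^2/(2*(1+t)) = t^3/(2*(1+t)) := by
    field_simp; ring
  have h2 : t^3/3 + t^4 * (16/15) ≤ t^3 * (8/17) := by
    nlinarith [pow_pos ht 3]
  linarith

-- monotone improvement: seq m + 1/(2(m+1)) is monotone for m ≥ 15
lemma aux_g_mono : ∀ m, 15 ≤ m →
    Real.eulerMascheroniSeq 15 + 1/(2*((15:ℕ)+1) : ℝ) ≤
      Real.eulerMascheroniSeq m + 1/(2*((m:ℝ)+1)) := by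
  intro m hm
  induction m, hm using Nat.le_induction with
  | base => norm_num
  | succ m hm ih =>
    refine le_trans ih ?_
    have hm1 : (16:ℝ) ≤ (m:ℝ) + 1 := by exact_mod_cast Nat.succ_le_succ hm
    have hpos : (0:ℝ) < (m:ℝ) + 1 := by linarith
    set t : ℝ := 1/((m:ℝ)+1) with hts
    have ht : 0 < t := by positivity
    have ht' : t ≤ 1/16 := by
      rw [hts, div_le_div_iff₀ hpos (by norm_num)]; linarith
    have hlog := aux_log_one_add_le ht ht'
    have hseq : Real.eulerMascheroniSeq (m+1) =
        Real.eulerMascheroniSeq m + 1/((m:ℝ)+1) - Real.log (1 + t) := by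
      unfold Real.eulerMascheroniSeq
      rw [harmonic_succ]
      have h1 : ((m:ℝ)+1+1) = ((m:ℝ)+1) * (1 + t) := by
        rw [hts]; field_simp
      push_cast
      rw [h1, Real.log_mul (by positivity) (by positivity)]
      ring
    rw [hseq]
    have heq : t^2/(2*(1+t)) = 1/(2*((m:ℝ)+1)) - 1/(2*((m:ℝ)+1+1)) := by
      rw [hts]; field_simp; ring
    have : Real.log (1+t) ≤ t - (1/(2*((m:ℝ)+1)) - 1/(2*((m:ℝ)+1+1))) := by
      rw [← heq]; exact hlog
    have hc : ((m:ℕ)+1 : ℝ) + 1 = (m:ℝ) + 1 + 1 := by push_cast; ring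
    push_cast
    rw [hts] at this ⊢
    linarith

lemma aux_gamma_lb :
    (harmonic 15 : ℝ) - Real.log 16 + 1/32 ≤ Real.eulerMascheroniConstant := by
  have h15 : Real.eulerMascheroniSeq 15 = (harmonic 15 : ℝ) - Real.log 16 := by
    unfold Real.eulerMascheroniSeq; norm_num
  have htend : Tendsto (fun m : ℕ => Real.eulerMascheroniSeq m + 1/(2*((m:ℝ)+1)))
      atTop (nhds (Real.eulerMascheroniConstant + 0)) := by
    apply Real.tendsto_eulerMascheroniSeq.add
    have := tendsto_one_div_add_atTop_nhds_zero_nat.const_mul (1/2 : ℝ)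
    simpa [div_eq_mul_inv, mul_comm, mul_assoc, mul_left_comm] using this
  rw [add_zero] at htend
  have := ge_of_tendsto htend (eventually_atTop.mpr ⟨15, aux_g_mono⟩)
  rw [h15] at this
  norm_num at this ⊢
  linarith

lemma aux_sinh {t : ℝ} (ht : 0 ≤ t) : 2*t ≤ Real.exp t - Real.exp (-t) := by
  have h1 : 1 + t + t^2/2 + t^3/6 ≤ Real.exp t := by
    have := Real.sum_le_exp_of_nonneg ht 4
    rw [show (4:ℕ) = 3+1 from rfl] at this
    simp [Finset.sum_range_succ, Nat.factorial] at this
    linarith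
  have hpos := Real.exp_pos t
  have h2 : Real.exp (-t) ≤ 1 - t + t^2/2 := by
    rw [Real.exp_neg, inv_le_iff_one_le_mul₀ hpos]
    nlinarith [pow_nonneg ht 3, pow_nonneg ht 4, pow_nonneg ht 5]
  nlinarith [pow_nonneg ht 3]

theorem lower_bound_comparison (n : ℕ) (hn : 3 ≤ n) :
    1 + Real.log (Real.sqrt (Real.exp 1) - 1) -
        Real.log (Real.exp (1/((n : ℝ) + 1)) - 1) <
      Real.log ((n : ℝ) + 1/2) + Real.eulerMascheroniConstant := by
  have hn4 : (4:ℝ) ≤ (n:ℝ) + 1 := by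
    have : (3:ℝ) ≤ (n:ℝ) := by exact_mod_cast hn
    linarith
  set x : ℝ := 1/((n:ℝ)+1) with hxs
  have hx : 0 < x := by positivity
  have hx4 : x ≤ 1/4 := by
    rw [hxs, div_le_div_iff₀ (by linarith) (by norm_num)]; linarith
  -- Step A: exp x - 1 ≥ x * exp(x/2)
  have hA : x * Real.exp (x/2) ≤ Real.exp x - 1 := by
    have h := aux_sinh (t := x/2) (by linarith)
    have hfac : Real.exp x - 1 = Real.exp (x/2) * (Real.exp (x/2) - Real.exp (-(x/2))) := by
      rw [mul_sub, ← Real.exp_add, ← Real.exp_add]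
      norm_num
    rw [hfac]
    nlinarith [Real.exp_pos (x/2)]
  have hxe : 0 < x * Real.exp (x/2) := by positivity
  -- Step B: log (exp x - 1) ≥ log x + x/2
  have hB : Real.log x + x/2 ≤ Real.log (Real.exp x - 1) := by
    calc Real.log x + x/2 = Real.log (x * Real.exp (x/2)) := by
          rw [Real.log_mul (ne_of_gt hx) (ne_of_gt (Real.exp_pos _)), Real.log_exp]
      _ ≤ _ := Real.log_le_log hxe hA
  have hlogx : Real.log x = - Real.log ((n:ℝ)+1) := by
    rw [hxs, one_div, Real.log_inv]
  -- Step C: log(n+1) ≤ log(n+1/2) + s + s²/2 + s³/3 + s⁴/(1-s), s = x/2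
  set s : ℝ := x/2 with hss
  have hs : 0 < s := by linarith
  have hs8 : s ≤ 1/8 := by linarith
  have habs := Real.abs_log_sub_add_sum_range_le (x := s)
    (by rw [abs_of_pos hs]; linarith) 3
  rw [abs_of_pos hs] at habs
  have hsum : (∑ i ∈ Finset.range 3, s ^ (i + 1) / ((i:ℝ) + 1)) = s + s^2/2 + s^3/3 := by
    simp [Finset.sum_range_succ]; ring
  rw [hsum] at habs
  have h1ms : 1 - s = ((n:ℝ) + 1/2)/((n:ℝ)+1) := by
    rw [hss, hxs]; field_simp; ring
  have hlog1ms : Real.log (1-s) = Real.log ((n:ℝ)+1/2) - Real.log ((n:ℝ)+1) := by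
    rw [h1ms, Real.log_div (by linarith) (by linarith)]
  have hC : Real.log ((n:ℝ)+1) ≤ Real.log ((n:ℝ)+1/2) + s + s^2/2 + s^3/3 + s^4/(1-s) := by
    have := (abs_le.mp habs).1
    linarith
  -- bound the error terms
  have hE : s^2/2 + s^3/3 + s^4/(1-s) ≤ 1/128 + 1/1536 + 1/3584 := by
    have h4 : s^4/(1-s) ≤ 1/3584 := by
      rw [div_le_iff₀ (by linarith)]
      nlinarith [pow_pos hs 2, pow_pos hs 3, pow_pos hs 4]
    have h2 : s^2/2 ≤ 1/128 := by nlinarith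
    have h3 : s^3/3 ≤ 1/1536 := by nlinarith [pow_pos hs 2]
    linarith
  -- numeric core: 1 + log(√e - 1) + 1/128 + 1/1536 + 1/3584 < γ
  have hsqrt : Real.sqrt (Real.exp 1) < 1.6487213 := by
    rw [Real.sqrt_lt' (by norm_num)]
    nlinarith [Real.exp_one_lt_d9]
  have hsqrt1 : 1 < Real.sqrt (Real.exp 1) := by
    rw [Real.lt_sqrt (by norm_num)]
    nlinarith [Real.exp_one_gt_d9]
  have hsp : 0 < Real.sqrt (Real.exp 1) - 1 := by linarith
  have hexpS : (10.3795408 : ℝ) < Real.exp 2.3407 := by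
    have hsum := Real.sum_le_exp_of_nonneg (x := 2.3407) (by norm_num) 15
    refine lt_of_lt_of_le ?_ hsum
    simp only [Finset.sum_range_succ, Finset.sum_range_zero]
    norm_num [Nat.factorial]
  have hL : Real.log (Real.sqrt (Real.exp 1) - 1) < 2.3407 - Real.log 16 := by
    have h16 : Real.log 16 + Real.log (Real.sqrt (Real.exp 1) - 1)
        = Real.log (16 * (Real.sqrt (Real.exp 1) - 1)) := by
      rw [Real.log_mul (by norm_num) (ne_of_gt hsp)]
    have hlt : 16 * (Real.sqrt (Real.exp 1) - 1) < Real.exp 2.3407 := by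
      nlinarith
    have : Real.log (16 * (Real.sqrt (Real.exp 1) - 1)) < 2.3407 := by
      have h' := Real.log_lt_log (by positivity) hlt
      rwa [Real.log_exp] at h'
    linarith
  have hgam := aux_gamma_lb
  have hharm : (harmonic 15 : ℝ) = 1195757/360360 := by
    norm_num [harmonic_succ, harmonic_zero]
  rw [hharm] at hgam
  have hRnum : (2.3407 : ℝ) ≤
      1195757/360360 + 1/32 - 1 - (1/128 + 1/1536 + 1/3584) := by
    norm_num
  -- combine everything
  have hM := hB
  rw [hlogx] at hM
  linarith
end
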